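/- arXiv:1109.4959 — 2 statements merged into one kernel-verified Lean document; each statement's English description precedes it below -/
import Mathlib

section
/- Let a < b and u < w be real numbers and let F ⊆ [a,b] × [u,w] be a closed subset of ℝ² such that for every x₀ ∈ [a,b] the set { y : (x₀, y) ∈ F } is infinite. Then there exist a point p ∈ F, unit vectors e₁, e₂ ∈ ℝ² with e₁ ≠ e₂ and e₁ ≠ −e₂, and sequences (pₙ), (qₙ) in F \ {p} converging to p such that (pₙ − p)/‖pₙ − p‖ → e₁ and (qₙ − p)/‖qₙ − p‖ → e₂. (That is, F has a point at which its contingent is not contained in a line.) -/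
open Set Metric Filter Topology MeasureTheory ENNReal

noncomputable section

abbrev R2 := EuclideanSpace ℝ (Fin 2)

/-- `D` is a connected component of `S`. -/
def IsConnCompOf {X : Type*} [TopologicalSpace X] (S D : Set X) : Prop :=
  ∃ x ∈ S, connectedComponentIn S x = D

/-- `x` is a branching point of the level set `{f = c}`: it lies in the closure of at
least three distinct connected components of `{f ≠ c}`. -/
def IsBranchingPoint (f : R2 → ℝ) (c : ℝ) (x : R2) : Prop :=
  ∃ D₁ D₂ D₃ : Set R2, IsConnCompOf {y | f y ≠ c} D₁ ∧ IsConnCompOf {y | f y ≠ c} D₂ ∧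
    IsConnCompOf {y | f y ≠ c} D₃ ∧ D₁ ≠ D₂ ∧ D₁ ≠ D₃ ∧ D₂ ≠ D₃ ∧
    x ∈ closure D₁ ∧ x ∈ closure D₂ ∧ x ∈ closure D₃

lemma r2_dist (q p : R2) : dist q p = Real.sqrt ((q 0 - p 0)^2 + (q 1 - p 1)^2) := by
  rw [EuclideanSpace.dist_eq, Fin.sum_univ_two]
  simp [Real.dist_eq, sq_abs]

lemma r2_norm (v : R2) : ‖v‖ = Real.sqrt ((v 0)^2 + (v 1)^2) := by
  rw [← dist_zero_right, r2_dist]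
  norm_num

lemma abs_coord0_le_dist (q p : R2) : |q 0 - p 0| ≤ dist q p := by
  rw [r2_dist, ← Real.sqrt_sq_eq_abs]
  apply Real.sqrt_le_sqrt; nlinarith [sq_nonneg (q 1 - p 1)]

lemma dist_le_abs_add (q p : R2) : dist q p ≤ |q 0 - p 0| + |q 1 - p 1| := by
  rw [r2_dist]
  rw [show |q 0 - p 0| + |q 1 - p 1| = Real.sqrt ((|q 0 - p 0| + |q 1 - p 1|)^2) by
    rw [Real.sqrt_sq (by positivity)]]
  apply Real.sqrt_le_sqrt
  have h0 := abs_nonneg (q 0 - p 0); have h1 := abs_nonneg (q 1 - p 1)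
  nlinarith [sq_abs (q 0 - p 0), sq_abs (q 1 - p 1), mul_nonneg h0 h1]

/-- If `g` has relative derivative zero at every point of `Y ⊆ [u,w]`, then `g '' Y` is null. -/
lemma image_null_of_deriv_zero (u w : ℝ) (huw : u ≤ w) (Y : Set ℝ) (g : ℝ → ℝ)
    (hYb : Y ⊆ Icc u w)
    (h : ∀ y ∈ Y, ∀ ε > 0, ∃ δ > 0, ∀ y' ∈ Y, |y' - y| < δ → |g y' - g y| ≤ ε * |y' - y|) :
    volume (g '' Y) = 0 := by
  have key : ∀ ε : ℝ, 0 < ε → volume (g '' Y) ≤ ENNReal.ofReal (ε * (2*(w - u) + 4)) := by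
    intro ε hε
    set Yk : ℕ → Set ℝ := fun k =>
      {y ∈ Y | ∀ y' ∈ Y, |y' - y| ≤ 1/(k+1) → |g y' - g y| ≤ ε * |y' - y|} with hYk
    have hmono : Monotone fun k => g '' Yk k := by
      intro k l hkl
      apply image_mono
      intro y hy
      refine ⟨hy.1, fun y' hy' hle => hy.2 y' hy' (hle.trans ?_)⟩
      apply one_div_le_one_div_of_le (by positivity)
      have : (k:ℝ) ≤ l := by exact_mod_cast hkl
      linarith
    have hcover : Y ⊆ ⋃ k, Yk k := by
      intro y hy
      obtain ⟨δ, hδ, hδ'⟩ := h y hy ε hε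
      obtain ⟨k, hk⟩ := exists_nat_gt (1/δ)
      refine mem_iUnion.2 ⟨k, hy, fun y' hy' hle => hδ' y' hy' ?_⟩
      have h1 : (0:ℝ) < k + 1 := by positivity
      have : 1/((k:ℝ)+1) < δ := by
        rw [div_lt_iff₀ h1]
        have h2 : 1/δ < k + 1 := by linarith
        calc (1:ℝ) = δ * (1/δ) := by field_simp
        _ < δ * (k+1) := by apply mul_lt_mul_of_pos_left h2 hδ
      linarith
    have himg : g '' Y ⊆ ⋃ k, g '' Yk k := by
      rw [← image_iUnion]; exact image_mono hcover
    have hbound : ∀ k, volume (g '' Yk k) ≤ ENNReal.ofReal (ε * (2*(w - u) + 4)) := by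
      intro k
      set c : ℝ := 1/(k+1) with hc
      have hcpos : 0 < c := by positivity
      have hc1 : c ≤ 1 := by
        rw [hc, div_le_one (by positivity)]
        linarith [Nat.cast_nonneg (α := ℝ) k]
      set N : ℕ := ⌈(w - u)/c⌉₊ with hN
      have hcov2 : ∀ y ∈ Yk k, ∃ n ≤ N, y ∈ Icc (u + n*c) (u + (n+1)*c) := by
        intro y hy
        have hy' := hYb hy.1
        have h0 : 0 ≤ (y - u)/c := div_nonneg (by linarith [hy'.1]) hcpos.le
        refine ⟨⌊(y - u)/c⌋₊, ?_, ?_, ?_⟩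
        · refine le_trans (Nat.floor_le_floor ?_) (Nat.floor_le_ceil _)
          gcongr
          linarith [hy'.2]
        · have := (le_div_iff₀ hcpos).1 (Nat.floor_le h0)
          linarith
        · have := (div_lt_iff₀ hcpos).1 (Nat.lt_floor_add_one ((y-u)/c))
          linarith
      have hpieces : ∀ n : ℕ, volume (g '' (Yk k ∩ Icc (u + n*c) (u + (n+1)*c)))
          ≤ ENNReal.ofReal (2*ε*c) := by
        intro n
        rcases eq_empty_or_nonempty (Yk k ∩ Icc (u + n*c) (u + (n+1)*c)) with he | ⟨y₀, hy₀⟩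
        · simp [he]
        have hsub2 : g '' (Yk k ∩ Icc (u + n*c) (u + (n+1)*c))
            ⊆ Icc (g y₀ - ε*c) (g y₀ + ε*c) := by
          rintro - ⟨y, hy, rfl⟩
          have hd : |y - y₀| ≤ c := by
            have h1 := hy.2.1; have h2 := hy.2.2; have h3 := hy₀.2.1; have h4 := hy₀.2.2
            rw [abs_le]; constructor <;> linarith
          have hgd := hy₀.1.2 y hy.1.1 (by rw [hc] at hd; exact hd)
          have h5 : |g y - g y₀| ≤ ε * c :=
            hgd.trans (mul_le_mul_of_nonneg_left hd hε.le)
          rw [abs_le] at h5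
          constructor <;> [linarith [h5.1]; linarith [h5.2]]
        calc volume _ ≤ volume (Icc (g y₀ - ε*c) (g y₀ + ε*c)) := measure_mono hsub2
          _ = ENNReal.ofReal (2*ε*c) := by rw [Real.volume_Icc]; congr 1; ring
      calc volume (g '' Yk k) ≤ volume (⋃ n ∈ Finset.range (N+1),
              g '' (Yk k ∩ Icc (u + n*c) (u + (n+1)*c))) := by
            apply measure_mono
            rintro - ⟨y, hy, rfl⟩
            obtain ⟨n, hn, hyn⟩ := hcov2 y hy
            exact mem_iUnion₂.2 ⟨n, Finset.mem_range.2 (by omega), ⟨y, ⟨hy, hyn⟩, rfl⟩⟩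
        _ ≤ ∑ n ∈ Finset.range (N+1), volume (g '' (Yk k ∩ Icc (u + n*c) (u + (n+1)*c))) :=
            measure_biUnion_finset_le _ _
        _ ≤ ∑ n ∈ Finset.range (N+1), ENNReal.ofReal (2*ε*c) :=
            Finset.sum_le_sum fun n _ => hpieces n
        _ = (N+1 : ℕ) * ENNReal.ofReal (2*ε*c) := by
            rw [Finset.sum_const, Finset.card_range, nsmul_eq_mul]
        _ ≤ ENNReal.ofReal (ε * (2*(w - u) + 4)) := by
            rw [show ((N+1 : ℕ) : ENNReal) = ENNReal.ofReal ((N:ℝ)+1) by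
              rw [ENNReal.ofReal_add (by positivity) zero_le_one]
              push_cast; simp]
            rw [← ENNReal.ofReal_mul (by linarith [Nat.cast_nonneg (α := ℝ) N])]
            apply ENNReal.ofReal_le_ofReal
            have hNle : (N:ℝ) < (w-u)/c + 1 := Nat.ceil_lt_add_one (div_nonneg (by linarith) hcpos.le)
            have hdc : ((w-u)/c)*c = w - u := div_mul_cancel₀ _ hcpos.ne'
            have h7 : (N:ℝ)*c < ((w-u)/c + 1)*c := mul_lt_mul_of_pos_right hNle hcpos
            have h8 : (N:ℝ)*c + c ≤ (w-u) + 2 := by nlinarith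
            have h9 : ε * ((N:ℝ)*c + c) ≤ ε * ((w-u)+2) := mul_le_mul_of_nonneg_left h8 hε.le
            nlinarith [h9]
    calc volume (g '' Y) ≤ volume (⋃ k, g '' Yk k) := measure_mono himg
      _ = ⨆ k, volume (g '' Yk k) := hmono.measure_iUnion
      _ ≤ ENNReal.ofReal (ε * (2*(w - u) + 4)) := iSup_le hbound
  have htend : Tendsto (fun n : ℕ => ENNReal.ofReal ((1/(n+1)) * (2*(w - u) + 4)))
      atTop (𝓝 0) := by
    rw [show (0:ENNReal) = ENNReal.ofReal 0 by simp]
    apply ENNReal.tendsto_ofReal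
    have := (tendsto_one_div_add_atTop_nhds_zero_nat : Tendsto (fun n : ℕ => 1 / ((n : ℝ) + 1)) atTop (𝓝 0))
    simpa using this.mul_const (2*(w - u) + 4)
  have hle : ∀ n : ℕ, volume (g '' Y) ≤ ENNReal.ofReal ((1/(n+1)) * (2*(w - u) + 4)) :=
    fun n => key _ (by positivity)
  have hfin := ge_of_tendsto htend (Eventually.of_forall hle)
  exact le_antisymm (by simpa using hfin) (zero_le)

/-- If a closed subset `F` of the rectangle `[a,b] × [u,w]` has infinitely many points on
every vertical line meeting the rectangle, then there is a point of `F` at which the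
contingent of `F` is not contained in a line: two distinct, non-opposite unit directions
are both attained as limits of directions towards points of `F`. -/
theorem exists_point_contingent_not_in_line
    (a b u w : ℝ) (hab : a < b) (huw : u < w) (F : Set R2) (hF : IsClosed F)
    (hsub : F ⊆ {p : R2 | a ≤ p 0 ∧ p 0 ≤ b ∧ u ≤ p 1 ∧ p 1 ≤ w})
    (hinf : ∀ x₀ ∈ Set.Icc a b, {y : ℝ | (WithLp.toLp 2 ![x₀, y] : R2) ∈ F}.Infinite) :
    ∃ p ∈ F, ∃ e₁ e₂ : R2, ‖e₁‖ = 1 ∧ ‖e₂‖ = 1 ∧ e₁ ≠ e₂ ∧ e₁ ≠ -e₂ ∧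
      ∃ pseq qseq : ℕ → R2,
        (∀ n, pseq n ∈ F \ {p}) ∧ (∀ n, qseq n ∈ F \ {p}) ∧
        Tendsto pseq atTop (𝓝 p) ∧ Tendsto qseq atTop (𝓝 p) ∧
        Tendsto (fun n => (‖pseq n - p‖)⁻¹ • (pseq n - p)) atTop (𝓝 e₁) ∧
        Tendsto (fun n => (‖qseq n - p‖)⁻¹ • (qseq n - p)) atTop (𝓝 e₂) := by
  by_contra hcon
  -- Step B : at every vertical accumulation point of `F`, all contingent directions are vertical
  have hB : ∀ p, p ∈ F → ∀ s : ℝ, (s = 1 ∨ s = -1) →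
      (∀ δ > 0, ∃ y, (WithLp.toLp 2 ![p 0, y] : R2) ∈ F ∧ s * (y - p 1) > 0 ∧ |y - p 1| < δ) →
      ∀ ε > 0, ∃ δ > 0, ∀ q ∈ F, dist q p < δ → |q 0 - p 0| ≤ ε * dist q p := by
    intro p hp s hs hva ε hε
    by_contra hno
    push_neg at hno
    have h1 : ∀ n : ℕ, ∃ q, q ∈ F ∧ dist q p < 1/(n+1) ∧ ε * dist q p < |q 0 - p 0| := by
      intro n
      obtain ⟨q, hqF, hq⟩ := hno (1/(n+1)) (by positivity)
      exact ⟨q, hqF, hq⟩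
    choose qf hqF hqd hqx using h1
    have hd0 : ∀ n, 0 < dist (qf n) p := by
      intro n
      rcases lt_or_eq_of_le (dist_nonneg (x := qf n) (y := p)) with h | h
      · exact h
      · exfalso
        have h2 := abs_coord0_le_dist (qf n) p
        have h3 := hqx n
        rw [← h] at h2 h3
        nlinarith
    have hqne : ∀ n, qf n ≠ p := fun n => dist_pos.1 (hd0 n)
    have hqtend : Tendsto qf atTop (𝓝 p) := by
      rw [tendsto_iff_dist_tendsto_zero]
      exact squeeze_zero (fun n => dist_nonneg) (fun n => (hqd n).le)
        tendsto_one_div_add_atTop_nhds_zero_nat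
    set v : ℕ → R2 := fun n => (‖qf n - p‖)⁻¹ • (qf n - p) with hv
    have hvs : ∀ n, v n ∈ sphere (0 : R2) 1 := by
      intro n
      rw [mem_sphere_zero_iff_norm]
      exact norm_smul_inv_norm (sub_ne_zero.2 (hqne n))
    obtain ⟨e₂, he₂, φ, hφ, hlim⟩ := tendsto_subseq_of_bounded isBounded_sphere hvs
    rw [isClosed_sphere.closure_eq, mem_sphere_zero_iff_norm] at he₂
    -- the first coordinate of e₂ is at least ε in absolute value
    have hv0 : ∀ n, ε ≤ |v n 0| := by
      intro n
      have hnorm : ‖qf n - p‖ = dist (qf n) p := (dist_eq_norm _ _).symm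
      have hva0 : v n 0 = (dist (qf n) p)⁻¹ * (qf n 0 - p 0) := by
        rw [hv]
        simp only [PiLp.smul_apply, PiLp.sub_apply, smul_eq_mul, hnorm]
      have h4 := hqx n
      have h5 : ε * dist (qf n) p * (dist (qf n) p)⁻¹ ≤ |qf n 0 - p 0| * (dist (qf n) p)⁻¹ :=
        mul_le_mul_of_nonneg_right h4.le (inv_nonneg.2 dist_nonneg)
      rw [mul_assoc, mul_inv_cancel₀ (hd0 n).ne', mul_one] at h5
      rw [hva0, abs_mul, abs_inv, abs_of_pos (hd0 n), mul_comm]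
      exact h5
    -- limit of first coordinates
    have hproj : Tendsto (fun n => (v (φ n)) 0) atTop (𝓝 (e₂ 0)) :=
      ((EuclideanSpace.proj (0 : Fin 2)).continuous.tendsto e₂).comp hlim
    have he₂0 : ε ≤ |e₂ 0| := by
      have habs : Tendsto (fun n => |(v (φ n)) 0|) atTop (𝓝 |e₂ 0|) :=
        (continuous_abs.tendsto _).comp hproj
      exact ge_of_tendsto habs (Eventually.of_forall fun n => hv0 (φ n))
    have he₂0' : e₂ 0 ≠ 0 := by
      intro h; rw [h] at he₂0; simp at he₂0; linarith
    -- the vertical sequence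
    have h6 : ∀ n : ℕ, ∃ y, (WithLp.toLp 2 ![p 0, y] : R2) ∈ F ∧ s * (y - p 1) > 0 ∧ |y - p 1| < 1/(n+1) :=
      fun n => hva (1/(n+1)) (by positivity)
    choose yf hyF hys hyd using h6
    set pf : ℕ → R2 := fun n => WithLp.toLp 2 ![p 0, yf n] with hpf
    have hyne : ∀ n, yf n - p 1 ≠ 0 := by
      intro n h
      have := hys n; rw [h, mul_zero] at this; exact lt_irrefl 0 this
    have hsub_eq : ∀ n, pf n - p = WithLp.toLp 2 ![0, yf n - p 1] := by
      intro n
      ext i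
      fin_cases i <;> simp [hpf]
    have hpf1 : ∀ n, pf n 1 = yf n := by intro n; simp [hpf]
    have hpne : ∀ n, pf n ≠ p := by
      intro n h
      apply hyne n
      have h1 : pf n 1 = p 1 := congrArg (fun z : R2 => z 1) h
      rw [hpf1] at h1
      exact sub_eq_zero.2 h1
    have hnormpf : ∀ n, ‖pf n - p‖ = |yf n - p 1| := by
      intro n
      rw [hsub_eq n, r2_norm]
      norm_num [Real.sqrt_sq_eq_abs]
    have hptend : Tendsto pf atTop (𝓝 p) := by
      rw [tendsto_iff_dist_tendsto_zero]
      refine squeeze_zero (fun n => dist_nonneg) (fun n => ?_)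
        tendsto_one_div_add_atTop_nhds_zero_nat
      rw [dist_eq_norm, hnormpf n]
      exact (hyd n).le
    set e₁ : R2 := WithLp.toLp 2 ![0, s] with he₁
    have he₁norm : ‖e₁‖ = 1 := by
      rw [he₁, r2_norm]
      rcases hs with h | h <;> norm_num [h]
    have he₁0 : e₁ 0 = 0 := by rw [he₁]; simp
    have hdir : ∀ n, (‖pf n - p‖)⁻¹ • (pf n - p) = e₁ := by
      intro n
      rw [hnormpf n, hsub_eq n, he₁]
      ext i
      fin_cases i
      · simp
      · simp only [PiLp.smul_apply, smul_eq_mul]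
        show |yf n - p 1|⁻¹ * (WithLp.toLp 2 ![0, yf n - p 1] : R2) 1 = (WithLp.toLp 2 ![(0:ℝ), s] : R2) 1
        simp only [PiLp.toLp_apply, Matrix.cons_val_one, Matrix.head_cons, Matrix.cons_val_zero]
        rcases hs with h | h
        · rw [h] at hys ⊢
          have hpos : 0 < yf n - p 1 := by have := hys n; linarith
          rw [abs_of_pos hpos, inv_mul_cancel₀ hpos.ne']
        · rw [h] at hys ⊢
          have hneg : yf n - p 1 < 0 := by have := hys n; nlinarith
          rw [abs_of_neg hneg, inv_neg, neg_mul, inv_mul_cancel₀ (ne_of_lt hneg)]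
    have hdirtend : Tendsto (fun n => (‖pf n - p‖)⁻¹ • (pf n - p)) atTop (𝓝 e₁) := by
      simp only [hdir]
      exact tendsto_const_nhds
    -- assemble the contradiction
    apply hcon
    refine ⟨p, hp, e₁, e₂, he₁norm, he₂, ?_, ?_, pf, qf ∘ φ, ?_, ?_, ?_, ?_, ?_, ?_⟩
    · intro h
      apply he₂0'
      rw [← congrArg (fun z : R2 => z 0) h, he₁0]
    · intro h
      apply he₂0'
      have h0 : e₁ 0 = (-e₂) 0 := congrArg (fun z : R2 => z 0) h
      rw [he₁0] at h0
      have : (-e₂) 0 = -(e₂ 0) := by simp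
      rw [this] at h0
      linarith
    · exact fun n => ⟨hyF n, by simp [hpne n]⟩
    · exact fun n => ⟨hqF (φ n), by simp [hqne (φ n)]⟩
    · exact hptend
    · exact hqtend.comp hφ.tendsto_atTop
    · exact hdirtend
    · exact hlim
  -- Step C : over every x in [a,b] there is a vertical accumulation point of F
  have hC : ∀ x ∈ Icc a b, ∃ p : R2, p ∈ F ∧ p 0 = x ∧ ∃ s : ℝ, (s = 1 ∨ s = -1) ∧
      ∀ δ > 0, ∃ y, (WithLp.toLp 2 ![p 0, y] : R2) ∈ F ∧ s * (y - p 1) > 0 ∧ |y - p 1| < δ := by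
    intro x hx
    set S : Set ℝ := {y : ℝ | (WithLp.toLp 2 ![x, y] : R2) ∈ F} with hS
    have hSsub : S ⊆ Icc u w := by
      intro y hy
      have := hsub hy
      simp only [mem_setOf_eq, PiLp.toLp_apply, Matrix.cons_val_zero, Matrix.cons_val_one, Matrix.head_cons]
        at this
      exact ⟨this.2.2.1, this.2.2.2⟩
    obtain ⟨y₀, hy₀K, hacc⟩ :=
      (hinf x hx).exists_accPt_of_subset_isCompact isCompact_Icc hSsub
    rw [accPt_iff_nhds] at hacc
    have hacc' : ∀ δ > 0, ∃ z ∈ S, z ≠ y₀ ∧ |z - y₀| < δ := by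
      intro δ hδ
      obtain ⟨z, ⟨hz1, hz2⟩, hz3⟩ := hacc (ball y₀ δ) (ball_mem_nhds _ hδ)
      exact ⟨z, hz2, hz3, by simpa [Real.dist_eq] using hz1⟩
    -- the point p = (x, y₀) belongs to F since F is closed
    have hzf : ∀ n : ℕ, ∃ z ∈ S, z ≠ y₀ ∧ |z - y₀| < 1/(n+1) :=
      fun n => hacc' _ (by positivity)
    choose zf hzS hzne hzd using hzf
    set Pp : R2 := WithLp.toLp 2 ![x, y₀] with hPp
    set P : ℕ → R2 := fun n => WithLp.toLp 2 ![x, zf n] with hP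
    have hPtend : Tendsto P atTop (𝓝 Pp) := by
      rw [tendsto_iff_dist_tendsto_zero]
      refine squeeze_zero (fun n => dist_nonneg) (fun n => ?_)
        tendsto_one_div_add_atTop_nhds_zero_nat
      have : dist (P n) Pp = |zf n - y₀| := by
        rw [r2_dist]
        simp [hP, hPp]
        rw [Real.sqrt_sq_eq_abs]
      rw [this]
      exact (hzd n).le
    have hPpF : Pp ∈ F := hF.mem_of_tendsto hPtend (Eventually.of_forall fun n => hzS n)
    have hPp0 : Pp 0 = x := by rw [hPp]; simp
    have hPp1 : Pp 1 = y₀ := by rw [hPp]; simp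
    refine ⟨Pp, hPpF, hPp0, ?_⟩
    by_cases hup : ∀ δ > 0, ∃ y, (WithLp.toLp 2 ![Pp 0, y] : R2) ∈ F ∧ 1 * (y - Pp 1) > 0 ∧ |y - Pp 1| < δ
    · exact ⟨1, Or.inl rfl, hup⟩
    · push_neg at hup
      obtain ⟨δ₁, hδ₁, hno1⟩ := hup
      refine ⟨-1, Or.inr rfl, ?_⟩
      intro δ hδ
      obtain ⟨z, hzS', hzne', hzd'⟩ := hacc' (min δ δ₁) (lt_min hδ hδ₁)
      refine ⟨z, ?_, ?_, ?_⟩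
      · rw [hPp0]; exact hzS'
      · rw [hPp1]
        rcases lt_or_gt_of_ne hzne' with h | h
        · nlinarith
        · exfalso
          have := hno1 z (by rw [hPp0]; exact hzS')
          rw [hPp1] at this
          have h2 := this (by linarith)
          linarith [lt_of_lt_of_le hzd' (min_le_right δ δ₁)]
      · rw [hPp1]; exact lt_of_lt_of_le hzd' (min_le_left _ _)
  -- Step D : choose for each x a point with all-ε vertical cone property
  have hΦ : ∀ x ∈ Icc a b, ∃ p : R2, p ∈ F ∧ p 0 = x ∧
      ∀ ε > 0, ∃ δ > 0, ∀ q ∈ F, dist q p < δ → |q 0 - p 0| ≤ ε * dist q p := by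
    intro x hx
    obtain ⟨p, hpF, hp0, s, hs, hva⟩ := hC x hx
    exact ⟨p, hpF, hp0, hB p hpF s hs hva⟩
  choose! pfun hpF hp0 hpΦ using hΦ
  -- Step E : the covering sets
  set A : ℕ → ℕ → ℕ → Set ℝ := fun m i i' =>
    {x | x ∈ Icc a b ∧
      (∀ q ∈ F, dist q (pfun x) < 1/(m+1) → |q 0 - x| ≤ (1/3) * dist q (pfun x)) ∧
      pfun x 1 ∈ Icc (u + i/(4*(m+1))) (u + (i+1)/(4*(m+1))) ∧
      x ∈ Icc (a + i'/(4*(m+1))) (a + (i'+1)/(4*(m+1)))} with hA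
  have hAcover : Icc a b ⊆ ⋃ (m : ℕ) (i : ℕ) (i' : ℕ), A m i i' := by
    intro x hx
    obtain ⟨δ, hδ, hδ'⟩ := hpΦ x hx (1/3) (by norm_num)
    obtain ⟨m, hm⟩ := exists_nat_gt (1/δ)
    have hmpos : (0:ℝ) < m + 1 := by positivity
    have hmδ : 1/((m:ℝ)+1) < δ := by
      rw [div_lt_iff₀ hmpos]
      have h2 : 1/δ < m + 1 := by linarith
      calc (1:ℝ) = δ * (1/δ) := by field_simp
      _ < δ * (m+1) := mul_lt_mul_of_pos_left h2 hδ
    have hc4 : (0:ℝ) < 4*((m:ℝ)+1) := by positivity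
    have hy1 : u ≤ pfun x 1 := (hsub (hpF x hx)).2.2.1
    have hx1 : a ≤ x := hx.1
    simp only [mem_iUnion]
    refine ⟨m, ⌊(pfun x 1 - u) * (4*(m+1))⌋₊, ⌊(x - a) * (4*(m+1))⌋₊, hx, ?_, ?_, ?_⟩
    · intro q hq hdq
      simpa [hp0 x hx] using hδ' q hq (lt_trans hdq hmδ)
    · constructor
      · have h3 : (⌊(pfun x 1 - u) * (4*(m+1))⌋₊ : ℝ) / (4*(m+1)) ≤ pfun x 1 - u := by
          rw [div_le_iff₀ hc4]
          exact Nat.floor_le (mul_nonneg (by linarith) hc4.le)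
        linarith [h3]
      · have h3 : pfun x 1 - u ≤ ((⌊(pfun x 1 - u) * (4*(m+1))⌋₊ : ℝ) + 1) / (4*(m+1)) := by
          rw [le_div_iff₀ hc4]
          nlinarith [Nat.lt_floor_add_one ((pfun x 1 - u) * (4*(m+1)))]
        linarith [h3]
    · constructor
      · have h3 : (⌊(x - a) * (4*(m+1))⌋₊ : ℝ) / (4*(m+1)) ≤ x - a := by
          rw [div_le_iff₀ hc4]
          exact Nat.floor_le (mul_nonneg (by linarith) hc4.le)
        linarith [h3]
      · have h3 : x - a ≤ ((⌊(x - a) * (4*(m+1))⌋₊ : ℝ) + 1) / (4*(m+1)) := by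
          rw [le_div_iff₀ hc4]
          nlinarith [Nat.lt_floor_add_one ((x - a) * (4*(m+1)))]
        linarith [h3]
  -- Step E' : each covering set is null
  have hAnull : ∀ m i i' : ℕ, volume (A m i i') = 0 := by
    intro m i i'
    set h : ℝ → ℝ := fun x => pfun x 1 with hh
    have hc4 : (0:ℝ) < 4*((m:ℝ)+1) := by positivity
    -- pair bound
    have hpair : ∀ x ∈ A m i i', ∀ x' ∈ A m i i', |x' - x| ≤ (1/2) * |h x' - h x| := by
      intro x hx x' hx'
      obtain ⟨hxab, hcone, hyc, hxc⟩ := hx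
      obtain ⟨hxab', hcone', hyc', hxc'⟩ := hx'
      have hdx : |x' - x| ≤ 1/(4*(m+1)) := by
        rw [abs_le]
        have e1 : ((i':ℝ)+1)/(4*(m+1)) - (i':ℝ)/(4*(m+1)) = 1/(4*(m+1)) := by ring
        constructor <;> linarith [hxc.1, hxc.2, hxc'.1, hxc'.2]
      have hdy : |h x' - h x| ≤ 1/(4*(m+1)) := by
        rw [abs_le]
        simp only [hh]
        have e2 : ((i:ℝ)+1)/(4*(m+1)) - (i:ℝ)/(4*(m+1)) = 1/(4*(m+1)) := by ring
        constructor <;> linarith [hyc.1, hyc.2, hyc'.1, hyc'.2]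
      have hd : dist (pfun x') (pfun x) ≤ |x' - x| + |h x' - h x| := by
        have := dist_le_abs_add (pfun x') (pfun x)
        rwa [hp0 x hxab, hp0 x' hxab'] at this
      have hdsmall : dist (pfun x') (pfun x) < 1/(m+1) := by
        have h1 : 1/(4*((m:ℝ)+1)) + 1/(4*((m:ℝ)+1)) < 1/((m:ℝ)+1) := by
          rw [← add_div, div_lt_div_iff₀ hc4 (by positivity)]
          ring_nf
          nlinarith [Nat.cast_nonneg (α := ℝ) m]
        linarith
      have hcq := hcone (pfun x') (hpF x' hxab') hdsmall
      rw [hp0 x' hxab'] at hcq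
      linarith [abs_nonneg (x' - x), abs_nonneg (h x' - h x)]
    have hinj : InjOn h (A m i i') := by
      intro x hx x' hx' hxx
      have := hpair x hx x' hx'
      rw [hxx] at this
      simp at this
      have : |x' - x| ≤ 0 := by simpa using this
      have := abs_nonneg (x' - x)
      rw [abs_le] at *
      linarith [this]
    set Y : Set ℝ := h '' A m i i' with hY
    set g : ℝ → ℝ := Function.invFunOn h (A m i i') with hg
    have himg : g '' Y = A m i i' := hinj.invFunOn_image Subset.rfl
    have hYsub : Y ⊆ Icc u w := by
      rintro - ⟨x, hx, rfl⟩
      exact ⟨(hsub (hpF x hx.1)).2.2.1, (hsub (hpF x hx.1)).2.2.2⟩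
    rw [← himg]
    apply image_null_of_deriv_zero u w huw.le Y g hYsub
    intro y hy ε hε
    have hex : ∃ x ∈ A m i i', h x = y := by
      rw [hY, mem_image] at hy
      obtain ⟨x, hx1, hx2⟩ := hy
      exact ⟨x, hx1, hx2⟩
    have hgy : g y ∈ A m i i' := Function.invFunOn_mem hex
    have hgyh : h (g y) = y := Function.invFunOn_eq hex
    have hε₁ : (0:ℝ) < min (ε/3) (1/3) := by positivity
    obtain ⟨δ₀, hδ₀, hcone₀⟩ := hpΦ (g y) hgy.1 (min (ε/3) (1/3)) hε₁
    refine ⟨(2/3)*δ₀, by positivity, ?_⟩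
    intro y' hy' hyy
    have hex' : ∃ x ∈ A m i i', h x = y' := by
      rw [hY, mem_image] at hy'
      obtain ⟨x, hx1, hx2⟩ := hy'
      exact ⟨x, hx1, hx2⟩
    have hgy' : g y' ∈ A m i i' := Function.invFunOn_mem hex'
    have hgyh' : h (g y') = y' := Function.invFunOn_eq hex'
    have hp2 := hpair (g y) hgy (g y') hgy'
    rw [hgyh, hgyh'] at hp2
    have hd : dist (pfun (g y')) (pfun (g y)) ≤ |g y' - g y| + |y' - y| := by
      have h1 := dist_le_abs_add (pfun (g y')) (pfun (g y))
      rw [hp0 (g y') hgy'.1, hp0 (g y) hgy.1] at h1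
      have h2 : pfun (g y') 1 = y' := hgyh'
      have h3 : pfun (g y) 1 = y := hgyh
      rw [h2, h3] at h1
      exact h1
    have hdlt : dist (pfun (g y')) (pfun (g y)) < δ₀ := by
      have := abs_nonneg (y' - y)
      calc dist (pfun (g y')) (pfun (g y)) ≤ |g y' - g y| + |y' - y| := hd
        _ ≤ (3/2) * |y' - y| := by linarith [hp2]
        _ < (3/2) * ((2/3)*δ₀) := by
            apply mul_lt_mul_of_pos_left hyy (by norm_num)
        _ = δ₀ := by ring
    have hc := hcone₀ (pfun (g y')) (hpF (g y') hgy'.1) hdlt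
    rw [hp0 (g y') hgy'.1, hp0 (g y) hgy.1] at hc
    have hd2 : dist (pfun (g y')) (pfun (g y)) ≤ (3/2) * |y' - y| := by
      linarith [hp2, hd, abs_nonneg (y' - y)]
    calc |g y' - g y| ≤ min (ε/3) (1/3) * dist (pfun (g y')) (pfun (g y)) := hc
      _ ≤ (ε/3) * ((3/2) * |y' - y|) := by
          apply mul_le_mul (min_le_left _ _) hd2 dist_nonneg (by positivity)
      _ ≤ ε * |y' - y| := by nlinarith [abs_nonneg (y' - y)]
  -- conclusion
  have hIccnull : volume (Icc a b) = 0 :=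
    measure_mono_null hAcover (measure_iUnion_null fun m =>
      measure_iUnion_null fun i => measure_iUnion_null fun i' => hAnull m i i')
  rw [Real.volume_Icc] at hIccnull
  have hba : b - a ≤ 0 := by simpa [ENNReal.ofReal_eq_zero] using hIccnull
  linarith
end
end

section
/- Let D be a connected component of {f ≠ c}. Then ∂D ∪ {∞} is a connected subset of S². -/
open Set Metric Filter Topology

noncomputable section

namespace FrontierAux

/-- Near every point there are points with larger and smaller `f`-values. -/
lemma exists_near_gt_lt {f : R2 → ℝ} (hf : Differentiable ℝ f) (hgrad : ∀ x, fderiv ℝ f x ≠ 0)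
    (x : R2) {ε : ℝ} (hε : 0 < ε) :
    (∃ y, dist y x < ε ∧ f x < f y) ∧ (∃ y, dist y x < ε ∧ f y < f x) := by
  obtain ⟨u, hu⟩ : ∃ u, fderiv ℝ f x u ≠ 0 := by
    by_contra h
    push_neg at h
    exact hgrad x (ContinuousLinearMap.ext fun u => by simp [h u])
  -- WLOG the derivative in direction u is positive
  obtain ⟨u, hu⟩ : ∃ u, 0 < fderiv ℝ f x u := by
    rcases lt_or_gt_of_ne hu with h | h
    · exact ⟨-u, by simpa using h⟩
    · exact ⟨u, h⟩
  set L := fderiv ℝ f x u with hL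
  have hline : HasDerivAt (fun t : ℝ => x + t • u) u 0 := by
    simpa using ((hasDerivAt_id (0:ℝ)).smul_const u).const_add x
  have hg : HasDerivAt (fun t : ℝ => f (x + t • u)) L 0 := by
    have hfd : HasFDerivAt f (fderiv ℝ f x) (x + (0:ℝ) • u) := by
      simpa using (hf x).hasFDerivAt
    exact hfd.comp_hasDerivAt 0 hline
  have hslope : Tendsto (slope (fun t : ℝ => f (x + t • u)) 0) (𝓝[≠] 0) (𝓝 L) :=
    hasDerivAt_iff_tendsto_slope.mp hg
  have hev : ∀ᶠ t in 𝓝[≠] (0:ℝ), 0 < slope (fun t : ℝ => f (x + t • u)) 0 t :=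
    hslope.eventually (eventually_gt_nhds hu)
  set ε' := ε / (‖u‖ + 1) with hε'
  have hε'pos : 0 < ε' := div_pos hε (by positivity)
  have hdist : ∀ t : ℝ, |t| < ε' → dist (x + t • u) x < ε := by
    intro t ht
    have : dist (x + t • u) x = |t| * ‖u‖ := by
      simp [dist_eq_norm, norm_smul, abs_mul]
    rw [this]
    calc |t| * ‖u‖ ≤ |t| * (‖u‖ + 1) := by
          exact mul_le_mul_of_nonneg_left (by linarith) (abs_nonneg t)
      _ < ε' * (‖u‖ + 1) := by
          exact mul_lt_mul_of_pos_right ht (by positivity)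
      _ = ε := by
          rw [hε', div_mul_cancel₀]; positivity
  have h2 : ∀ᶠ t in 𝓝 (0:ℝ), |t| < ε' := by
    have hc : Continuous (fun t : ℝ => |t|) := continuous_abs
    have := (hc.tendsto 0).eventually (eventually_lt_nhds (show |(0:ℝ)| < ε' by simpa using hε'pos))
    exact this
  have gval : ∀ t : ℝ, (fun s : ℝ => f (x + s • u)) t = f (x + t • u) := fun _ => rfl
  constructor
  · haveI : (𝓝[>] (0:ℝ)).NeBot := nhdsGT_neBot 0
    have h1 : ∀ᶠ t in 𝓝[>] (0:ℝ), 0 < slope (fun t : ℝ => f (x + t • u)) 0 t :=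
      hev.filter_mono (nhdsWithin_mono 0 (fun t (ht : t ∈ Ioi (0:ℝ)) => ne_of_gt ht))
    have h3 : ∀ᶠ t in 𝓝[>] (0:ℝ), t ∈ Ioi (0:ℝ) := eventually_mem_nhdsWithin
    obtain ⟨t, ht, htε, hts⟩ := (h3.and ((h2.filter_mono nhdsWithin_le_nhds).and h1)).exists
    refine ⟨x + t • u, hdist t htε, ?_⟩
    rw [slope_def_field] at hts
    rw [sub_zero] at hts
    rcases div_pos_iff.mp hts with ⟨hnum, -⟩ | ⟨-, hden⟩
    · simpa using hnum
    · exact absurd ht (by simp; linarith)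
  · haveI : (𝓝[<] (0:ℝ)).NeBot := nhdsLT_neBot 0
    have h1 : ∀ᶠ t in 𝓝[<] (0:ℝ), 0 < slope (fun t : ℝ => f (x + t • u)) 0 t :=
      hev.filter_mono (nhdsWithin_mono 0 (fun t (ht : t ∈ Iio (0:ℝ)) => ne_of_lt ht))
    have h3 : ∀ᶠ t in 𝓝[<] (0:ℝ), t ∈ Iio (0:ℝ) := eventually_mem_nhdsWithin
    obtain ⟨t, ht, htε, hts⟩ := (h3.and ((h2.filter_mono nhdsWithin_le_nhds).and h1)).exists
    refine ⟨x + t • u, hdist t htε, ?_⟩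
    rw [slope_def_field] at hts
    rw [sub_zero] at hts
    rcases div_pos_iff.mp hts with ⟨-, hden⟩ | ⟨hnum, -⟩
    · exact absurd ht (by simp; linarith)
    · simpa using hnum

/-- Maximum principle "pocket" lemma: a nonempty bounded open set whose frontier lies in the
level set `{f = c}` is impossible. -/
lemma pocket {f : R2 → ℝ} (hf : Differentiable ℝ f) (hgrad : ∀ x, fderiv ℝ f x ≠ 0) {c : ℝ}
    {O : Set R2} (hO : IsOpen O) (hb : Bornology.IsBounded O) (hne : O.Nonempty)
    (hfr : ∀ x ∈ frontier O, f x = c) : False := by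
  obtain ⟨x₀, hx₀⟩ := hne
  have hccl : IsCompact (closure O) := isCompact_of_isClosed_isBounded isClosed_closure hb.closure
  have hclne : (closure O).Nonempty := ⟨x₀, subset_closure hx₀⟩
  obtain ⟨z, hz, hzmax⟩ := hccl.exists_isMaxOn hclne hf.continuous.continuousOn
  obtain ⟨w, hw, hwmin⟩ := hccl.exists_isMinOn hclne hf.continuous.continuousOn
  have hsplit : ∀ y ∈ closure O, y ∈ O ∨ y ∈ frontier O := by
    intro y hy
    by_cases h : y ∈ O
    · exact Or.inl h
    · exact Or.inr (by rw [hO.frontier_eq]; exact ⟨hy, h⟩)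
  have hzc : f z ≤ c := by
    by_contra h
    push_neg at h
    have hzO : z ∈ O := by
      rcases hsplit z hz with h' | h'
      · exact h'
      · exact absurd (hfr z h') (by linarith)
    obtain ⟨r, hr, hball⟩ := Metric.isOpen_iff.mp hO z hzO
    obtain ⟨⟨y, hyd, hyf⟩, -⟩ := exists_near_gt_lt hf hgrad z hr
    exact absurd (hzmax (subset_closure (hball hyd))) (by simp; linarith)
  have hwc : c ≤ f w := by
    by_contra h
    push_neg at h
    have hwO : w ∈ O := by
      rcases hsplit w hw with h' | h'
      · exact h'
      · exact absurd (hfr w h') (by linarith)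
    obtain ⟨r, hr, hball⟩ := Metric.isOpen_iff.mp hO w hwO
    obtain ⟨-, ⟨y, hyd, hyf⟩⟩ := exists_near_gt_lt hf hgrad w hr
    exact absurd (hwmin (subset_closure (hball hyd))) (by simp; linarith)
  have hconst : ∀ y ∈ closure O, f y = c := by
    intro y hy
    have h1 := hzmax hy
    have h2 := hwmin hy
    simp only [IsMaxOn, IsMinOn] at *
    have := hzmax hy
    have := hwmin hy
    simp at *
    linarith [hzmax hy, hwmin hy]
  obtain ⟨r, hr, hball⟩ := Metric.isOpen_iff.mp hO x₀ hx₀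
  have heq : f =ᶠ[𝓝 x₀] fun _ => c := by
    filter_upwards [Metric.ball_mem_nhds x₀ hr] with y hy
    exact hconst y (subset_closure (hball hy))
  have : fderiv ℝ f x₀ = 0 := by
    rw [heq.fderiv_eq]
    exact fderiv_const_apply c
  exact hgrad x₀ this

/-- A continuous integer-valued function on a preconnected set is constant. -/
lemma int_valued_const {s : Set R2} (hs : IsPreconnected s) {g : R2 → ℝ}
    (hg : ContinuousOn g s) (hint : ∀ x ∈ s, ∃ n : ℤ, g x = n)
    {x y : R2} (hx : x ∈ s) (hy : y ∈ s) : g x = g y := by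
  have himg : IsPreconnected (g '' s) := hs.image g hg
  by_contra hne
  -- wlog g x < g y
  have key : ∀ a b : R2, a ∈ s → b ∈ s → g a < g b → False := by
    intro a b ha hb hab
    obtain ⟨n, hn⟩ := hint a ha
    obtain ⟨m, hm⟩ := hint b hb
    have hnm : n < m := by
      have : (n:ℝ) < m := by rw [← hn, ← hm]; exact hab
      exact_mod_cast this
    have hmem : (n:ℝ) + 1/2 ∈ g '' s := by
      have h1 : g a ∈ g '' s := ⟨a, ha, rfl⟩
      have h2 : g b ∈ g '' s := ⟨b, hb, rfl⟩
      apply himg.Icc_subset h1 h2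
      have hcast : (n:ℝ) + 1 ≤ m := by exact_mod_cast hnm
      exact ⟨by rw [hn]; linarith, by rw [hm]; linarith⟩
    obtain ⟨z, hz, hgz⟩ := hmem
    obtain ⟨k, hk⟩ := hint z hz
    rw [hk] at hgz
    have : (2*k : ℤ) = 2*n + 1 := by
      have : (2*(k:ℝ)) = 2*n + 1 := by linarith
      exact_mod_cast this
    omega
  rcases lt_trichotomy (g x) (g y) with h | h | h
  · exact key x y hx hy h
  · exact hne h
  · exact key y x hy hx h

lemma re_pos_of_close {a b : ℂ} (ha : ‖a‖ = 1) (hb : ‖b‖ = 1)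
    (hab : ‖a - b‖ < 1) : 0 < (a / b).re := by
  have hnsa : Complex.normSq a = 1 := by rw [Complex.normSq_eq_norm_sq, ha]; norm_num
  have hnsb : Complex.normSq b = 1 := by rw [Complex.normSq_eq_norm_sq, hb]; norm_num
  have hnsab : Complex.normSq (a - b) < 1 := by
    rw [Complex.normSq_eq_norm_sq]
    nlinarith [norm_nonneg (a - b)]
  have hre : (a / b).re = (a.re * b.re + a.im * b.im) / Complex.normSq b := by
    rw [Complex.div_re]; ring
  rw [hre, hnsb, div_one]
  have h1 : Complex.normSq (a - b) =
      Complex.normSq a + Complex.normSq b - 2 * (a.re * b.re + a.im * b.im) := by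
    simp only [Complex.normSq_apply, Complex.sub_re, Complex.sub_im]
    ring
  nlinarith

lemma telescope (F : ℕ → ℂ) (hF : ∀ k, F k ≠ 0) (N : ℕ) :
    ∏ k ∈ Finset.range N, F (k + 1) / F k = F N / F 0 := by
  induction N with
  | zero => simp [div_self (hF 0)]
  | succ n ih =>
      rw [Finset.prod_range_succ, ih]
      rw [div_mul_div_comm]
      rw [mul_comm (F n)]
      rw [mul_div_mul_right _ _ (hF n)]

section Lift

variable {φ : R2 → ℂ} (hφ : Continuous φ) (habs : ∀ z, ‖φ z‖ = 1)

private def liftSum (φ : R2 → ℂ) (N : ℕ) (z : R2) : ℝ :=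
  ∑ k ∈ Finset.range N, Complex.arg (φ ((((k:ℝ) + 1) / (N:ℝ)) • z) / φ (((k:ℝ) / (N:ℝ)) • z))

include habs in
lemma liftSum_exp {N : ℕ} (hN : 1 ≤ N) (z : R2) :
    Complex.exp (liftSum φ N z * Complex.I) = φ z / φ 0 := by
  have hne : ∀ w, φ w ≠ 0 := fun w => by
    intro h; have := habs w; rw [h] at this; simp at this
  have habsq : ∀ k : ℕ,
      ‖φ ((((k:ℝ) + 1) / (N:ℝ)) • z) / φ (((k:ℝ) / (N:ℝ)) • z)‖ = 1 := by
    intro k; rw [norm_div, habs, habs]; norm_num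
  have : (liftSum φ N z : ℂ) * Complex.I =
      ∑ k ∈ Finset.range N,
        (Complex.arg (φ ((((k:ℝ) + 1) / (N:ℝ)) • z) / φ (((k:ℝ) / (N:ℝ)) • z)) : ℂ)
          * Complex.I := by
    rw [liftSum]
    push_cast
    rw [Finset.sum_mul]
  rw [this, Complex.exp_sum]
  have hterm : ∀ k ∈ Finset.range N,
      Complex.exp ((Complex.arg (φ ((((k:ℝ) + 1) / (N:ℝ)) • z) / φ (((k:ℝ) / (N:ℝ)) • z)) : ℂ)
        * Complex.I) = φ ((((k:ℝ) + 1) / (N:ℝ)) • z) / φ (((k:ℝ) / (N:ℝ)) • z) := by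
    intro k _
    have := Complex.norm_mul_exp_arg_mul_I
      (φ ((((k:ℝ) + 1) / (N:ℝ)) • z) / φ (((k:ℝ) / (N:ℝ)) • z))
    rw [habsq k] at this
    simpa using this
  rw [Finset.prod_congr rfl hterm]
  have htel := telescope (fun j : ℕ => φ (((j:ℝ) / (N:ℝ)) • z)) (fun k => hne _) N
  simp only [Nat.cast_add, Nat.cast_one, Nat.cast_zero] at htel
  rw [htel]
  have hN0 : (N:ℝ) ≠ 0 := by positivity
  rw [div_self hN0, zero_div, one_smul, zero_smul]

include hφ habs in
lemma liftSum_continuousOn {N : ℕ} {R : ℝ}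
    (hclose : ∀ w ∈ closedBall (0:R2) R, ∀ k : ℕ, k < N →
      ‖φ ((((k:ℝ) + 1) / (N:ℝ)) • w) - φ (((k:ℝ) / (N:ℝ)) • w)‖ < 1) :
    ContinuousOn (liftSum φ N) (closedBall (0:R2) R) := by
  have hne : ∀ w, φ w ≠ 0 := fun w => by
    intro h; have := habs w; rw [h] at this; simp at this
  apply continuousOn_finset_sum
  intro k hk
  intro z hz
  apply ContinuousAt.continuousWithinAt
  have hq : ContinuousAt (fun w : R2 => φ ((((k:ℝ) + 1) / (N:ℝ)) • w) / φ (((k:ℝ) / (N:ℝ)) • w)) z := by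
    apply ContinuousAt.div
    · exact (hφ.comp (continuous_const_smul _)).continuousAt
    · exact (hφ.comp (continuous_const_smul _)).continuousAt
    · exact hne _
  have hslit : (φ ((((k:ℝ) + 1) / (N:ℝ)) • z) / φ (((k:ℝ) / (N:ℝ)) • z)) ∈ Complex.slitPlane := by
    rw [Complex.mem_slitPlane_iff]
    left
    exact re_pos_of_close (habs _) (habs _) (hclose z hz k (Finset.mem_range.mp hk))
  exact ContinuousAt.comp (x := z)
    (g := Complex.arg)
    (f := fun w : R2 => φ ((((k:ℝ) + 1) / (N:ℝ)) • w) / φ (((k:ℝ) / (N:ℝ)) • w))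
    (Complex.continuousAt_arg hslit) hq

include hφ habs in
lemma exists_good_N {R : ℝ} (hR : 0 < R) :
    ∃ N : ℕ, 1 ≤ N ∧ ContinuousOn (liftSum φ N) (closedBall (0:R2) R) := by
  have hUC : UniformContinuousOn φ (closedBall (0:R2) R) :=
    (isCompact_closedBall 0 R).uniformContinuousOn_of_continuous hφ.continuousOn
  rw [Metric.uniformContinuousOn_iff] at hUC
  obtain ⟨δ, hδ, hUC⟩ := hUC 1 one_pos
  obtain ⟨N, hN⟩ := exists_nat_gt (max 1 (R / δ))
  have hN1 : 1 ≤ N := by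
    have := (le_max_left 1 (R/δ)).trans_lt hN
    exact_mod_cast this.le
  refine ⟨N, hN1, liftSum_continuousOn hφ habs ?_⟩
  intro w hw k hk
  have hNpos : (0:ℝ) < N := by positivity
  have hw' : ‖w‖ ≤ R := by simpa [mem_closedBall, dist_eq_norm] using hw
  have hmem : ∀ t : ℝ, 0 ≤ t → t ≤ 1 → t • w ∈ closedBall (0:R2) R := by
    intro t ht ht1
    simp only [mem_closedBall, dist_eq_norm, sub_zero, norm_smul, Real.norm_eq_abs,
      abs_of_nonneg ht]
    calc t * ‖w‖ ≤ 1 * ‖w‖ := mul_le_mul_of_nonneg_right ht1 (norm_nonneg w)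
      _ = ‖w‖ := one_mul _
      _ ≤ R := hw'
  have hk1 : ((k:ℝ) + 1) / (N:ℝ) ≤ 1 := by
    rw [div_le_one hNpos]
    have : (k:ℝ) + 1 ≤ N := by exact_mod_cast Nat.succ_le_of_lt hk
    linarith
  have hk0 : (0:ℝ) ≤ (k:ℝ) / (N:ℝ) := by positivity
  have hmem1 := hmem (((k:ℝ) + 1) / (N:ℝ)) (by positivity) hk1
  have hk2 : (k:ℝ) / (N:ℝ) ≤ 1 := by
    rw [div_le_one hNpos]
    exact_mod_cast (le_of_lt hk)
  have hmem2 := hmem ((k:ℝ) / (N:ℝ)) hk0 hk2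
  have hdistsmul : dist ((((k:ℝ) + 1) / (N:ℝ)) • w) (((k:ℝ) / (N:ℝ)) • w) < δ := by
    rw [dist_eq_norm, ← sub_smul]
    have : ((k:ℝ) + 1) / (N:ℝ) - (k:ℝ) / (N:ℝ) = 1 / (N:ℝ) := by field_simp; ring
    rw [this, norm_smul, Real.norm_eq_abs, abs_of_pos (by positivity)]
    have hRN : R / (N:ℝ) < δ := by
      have h2 : R / δ < N := (le_max_right 1 (R/δ)).trans_lt hN
      have h3 : R / δ * δ < (N:ℝ) * δ := mul_lt_mul_of_pos_right h2 hδ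
      have h4 : R / δ * δ = R := by field_simp
      rw [div_lt_iff₀ hNpos, mul_comm]
      linarith
    calc (1 / (N:ℝ)) * ‖w‖ ≤ (1 / (N:ℝ)) * R := by
          exact mul_le_mul_of_nonneg_left hw' (by positivity)
      _ = R / (N:ℝ) := by ring
      _ < δ := hRN
  have := hUC _ hmem1 _ hmem2 hdistsmul
  rwa [Complex.dist_eq] at this

include hφ habs in
lemma exists_lift :
    ∃ h : R2 → ℝ, Continuous h ∧ ∀ z, φ z = φ 0 * Complex.exp ((h z : ℂ) * Complex.I) := by
  classical
  have hne : ∀ w, φ w ≠ 0 := fun w => by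
    intro h; have := habs w; rw [h] at this; simp at this
  -- agreement of liftSum's on balls
  have hagree : ∀ (N M : ℕ) (R : ℝ), 0 < R → 1 ≤ N → 1 ≤ M →
      ContinuousOn (liftSum φ N) (closedBall (0:R2) R) →
      ContinuousOn (liftSum φ M) (closedBall (0:R2) R) →
      ∀ z ∈ closedBall (0:R2) R, liftSum φ N z = liftSum φ M z := by
    intro N M R hR hN hM hcN hcM z hz
    set d : R2 → ℝ := fun w => (liftSum φ N w - liftSum φ M w) / (2 * Real.pi) with hd
    have hdc : ContinuousOn d (closedBall (0:R2) R) := by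
      apply ContinuousOn.div_const
      exact hcN.sub hcM
    have hint : ∀ w ∈ closedBall (0:R2) R, ∃ n : ℤ, d w = n := by
      intro w _
      have h1 := liftSum_exp habs hN w
      have h2 := liftSum_exp habs hM w
      have h3 : Complex.exp ((liftSum φ N w : ℂ) * Complex.I)
          = Complex.exp ((liftSum φ M w : ℂ) * Complex.I) := by rw [h1, h2]
      obtain ⟨n, hn⟩ := Complex.exp_eq_exp_iff_exists_int.mp h3
      refine ⟨n, ?_⟩
      have him := congrArg Complex.im hn
      simp only [Complex.add_im, Complex.mul_im, Complex.ofReal_re, Complex.I_im,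
        Complex.ofReal_im, Complex.I_re, Complex.intCast_im, Complex.intCast_re,
        Complex.mul_re, Complex.re_ofNat, Complex.im_ofNat, Complex.ofReal_mul] at him
      -- him : liftSum φ N w = liftSum φ M w + n * (2 * π)
      rw [hd]
      have hπ : (2:ℝ) * Real.pi ≠ 0 := by positivity
      field_simp
      push_cast at him ⊢
      linarith
    have hpre : IsPreconnected (closedBall (0:R2) R) := (convex_closedBall _ _).isPreconnected
    have h0mem : (0:R2) ∈ closedBall (0:R2) R := by simp [hR.le]
    have hd0 : d 0 = 0 := by
      have hz0 : ∀ K : ℕ, liftSum φ K 0 = 0 := by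
        intro K
        rw [liftSum]
        apply Finset.sum_eq_zero
        intro k _
        rw [smul_zero, smul_zero, div_self (hne _), Complex.arg_one]
      rw [hd]
      simp [hz0]
    have := int_valued_const hpre hdc hint hz h0mem
    rw [hd0] at this
    rw [hd] at this
    have hπ : (2:ℝ) * Real.pi ≠ 0 := by positivity
    field_simp at this
    linarith
  -- choice of N for each natural radius
  have hch : ∀ n : ℕ, ∃ N : ℕ, 1 ≤ N ∧
      ContinuousOn (liftSum φ N) (closedBall (0:R2) ((n:ℝ) + 1)) := by
    intro n
    exact exists_good_N hφ habs (by positivity)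
  choose Nf hNf1 hNfc using hch
  set h : R2 → ℝ := fun z => liftSum φ (Nf ⌊‖z‖⌋₊) z with hh
  have hloc : ∀ (m : ℕ) (z : R2), z ∈ closedBall (0:R2) ((m:ℝ) + 1) →
      h z = liftSum φ (Nf m) z := by
    intro m z hz
    have hz2 : z ∈ closedBall (0:R2) ((⌊‖z‖⌋₊ : ℝ) + 1) := by
      simp only [mem_closedBall, dist_eq_norm, sub_zero]
      exact (Nat.lt_floor_add_one ‖z‖).le
    set R' : ℝ := min ((m:ℝ) + 1) ((⌊‖z‖⌋₊ : ℝ) + 1) with hR'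
    have hR'pos : 0 < R' := by
      apply lt_min <;> positivity
    have hzR' : z ∈ closedBall (0:R2) R' := by
      simp only [mem_closedBall, dist_eq_norm, sub_zero] at *
      exact le_min (by simpa using hz) (by simpa using hz2)
    have hsub1 : closedBall (0:R2) R' ⊆ closedBall (0:R2) ((m:ℝ) + 1) :=
      closedBall_subset_closedBall (min_le_left _ _)
    have hsub2 : closedBall (0:R2) R' ⊆ closedBall (0:R2) ((⌊‖z‖⌋₊ : ℝ) + 1) :=
      closedBall_subset_closedBall (min_le_right _ _)
    exact hagree (Nf ⌊‖z‖⌋₊) (Nf m) R' hR'pos (hNf1 _) (hNf1 _)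
      ((hNfc _).mono hsub2) ((hNfc _).mono hsub1) z hzR'
  refine ⟨h, ?_, ?_⟩
  · rw [continuous_iff_continuousAt]
    intro z₀
    set m : ℕ := ⌊‖z₀‖⌋₊ + 1 with hm
    have hz₀ball : z₀ ∈ ball (0:R2) ((m:ℝ) + 1) := by
      simp only [mem_ball, dist_eq_norm, sub_zero]
      have := Nat.lt_floor_add_one ‖z₀‖
      push_cast [hm]
      linarith
    have hball_sub : ball (0:R2) ((m:ℝ) + 1) ⊆ closedBall (0:R2) ((m:ℝ) + 1) :=
      ball_subset_closedBall
    have hca : ContinuousAt (liftSum φ (Nf m)) z₀ := by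
      apply (hNfc m).continuousAt
      exact mem_nhds_iff.mpr ⟨ball (0:R2) ((m:ℝ) + 1), hball_sub, isOpen_ball, hz₀ball⟩
    apply hca.congr
    have hev : ∀ᶠ w in 𝓝 z₀, w ∈ ball (0:R2) ((m:ℝ) + 1) :=
      isOpen_ball.mem_nhds hz₀ball
    filter_upwards [hev] with w hw
    exact (hloc m w (hball_sub hw)).symm
  · intro z
    have hz : z ∈ closedBall (0:R2) ((⌊‖z‖⌋₊ : ℝ) + 1) := by
      simp only [mem_closedBall, dist_eq_norm, sub_zero]
      exact (Nat.lt_floor_add_one ‖z‖).le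
    have := liftSum_exp habs (hNf1 ⌊‖z‖⌋₊) z
    rw [hh]
    rw [this]
    rw [mul_div_cancel₀ _ (hne 0)]

end Lift

lemma exp_real_I_eq {x y : ℝ} (n : ℤ) (h : x = y + n * (2 * Real.pi)) :
    Complex.exp ((x:ℂ) * Complex.I) = Complex.exp ((y:ℂ) * Complex.I) :=
  Complex.exp_eq_exp_iff_exists_int.mpr ⟨n, by rw [h]; push_cast; ring⟩

/-- Unicoherence of the plane (the form we need): the plane cannot be covered by two closed
preconnected sets whose intersection splits into two nonempty disjoint closed pieces. -/
lemma unicoherence {F₁ F₂ K₁ K₂ : Set R2} (h₁ : IsClosed F₁) (h₂ : IsClosed F₂)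
    (hc₁ : IsPreconnected F₁) (hc₂ : IsPreconnected F₂) (hu : F₁ ∪ F₂ = univ)
    (hK : F₁ ∩ F₂ = K₁ ∪ K₂) (hK₁ : IsClosed K₁) (hK₂ : IsClosed K₂)
    (hd : Disjoint K₁ K₂) (hn₁ : K₁.Nonempty) (hn₂ : K₂.Nonempty) : False := by
  classical
  obtain ⟨u, hu0, hu1, hu01⟩ := exists_continuous_zero_one_of_isClosed hK₁ hK₂ hd
  set φ : R2 → ℂ := fun z =>
    if z ∈ F₁ then Complex.exp ((Real.pi * u z : ℝ) * Complex.I)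
    else Complex.exp ((-(Real.pi * u z) : ℝ) * Complex.I) with hφdef
  have hfr : ∀ z ∈ frontier F₁, z ∈ F₁ ∩ F₂ := by
    intro z hz
    constructor
    · exact h₁.frontier_subset hz
    · have h2 : z ∈ closure F₁ᶜ := by
        have := frontier_subset_closure (s := F₁ᶜ)
        rw [frontier_compl] at this
        exact this hz
      have hsub : F₁ᶜ ⊆ F₂ := by
        intro w hw
        have hw2 : w ∈ F₁ ∪ F₂ := by rw [hu]; trivial
        rcases hw2 with h | h
        · exact absurd h hw
        · exact h
      exact h₂.closure_subset ((closure_mono hsub) h2)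
  have hval : ∀ z ∈ F₁ ∩ F₂, u z = 0 ∨ u z = 1 := by
    intro z hz
    rw [hK] at hz
    rcases hz with hz | hz
    · exact Or.inl (hu0 hz)
    · exact Or.inr (hu1 hz)
  have hφc : Continuous φ := by
    apply Continuous.if
    · intro z hz
      have hz' : z ∈ F₁ ∩ F₂ := hfr z (by simpa using hz)
      rcases hval z hz' with h | h <;> rw [h]
      · norm_num
      · exact exp_real_I_eq 1 (by ring)
    · exact Complex.continuous_exp.comp ((Complex.continuous_ofReal.comp
        (continuous_const.mul u.continuous)).mul continuous_const)
    · exact Complex.continuous_exp.comp ((Complex.continuous_ofReal.comp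
        ((continuous_const.mul u.continuous).neg)).mul continuous_const)
  have hφabs : ∀ z, ‖φ z‖ = 1 := by
    intro z
    rw [hφdef]
    by_cases h : z ∈ F₁
    · simp only [h, if_pos]
      exact Complex.norm_exp_ofReal_mul_I _
    · simp only [h, if_neg, not_false_iff]
      exact Complex.norm_exp_ofReal_mul_I _
  obtain ⟨h, hhc, hhid⟩ := exists_lift hφc hφabs
  -- the value at 0
  set a₀ : ℝ := if (0:R2) ∈ F₁ then Real.pi * u 0 else -(Real.pi * u 0) with ha₀
  have hφ0 : φ 0 = Complex.exp ((a₀ : ℝ) * Complex.I) := by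
    rw [hφdef, ha₀]
    by_cases h : (0:R2) ∈ F₁ <;> simp [h]
  have hid : ∀ z, φ z = Complex.exp (((h z + a₀ : ℝ) : ℂ) * Complex.I) := by
    intro z
    rw [hhid z, hφ0, ← Complex.exp_add]
    congr 1
    push_cast
    ring
  -- integer-valued functions on F₁ and F₂
  have hint : ∀ (s : Set R2) (sgn : ℝ), (∀ z ∈ s, φ z = Complex.exp ((sgn * Real.pi * u z : ℝ) * Complex.I)) →
      ∀ z ∈ s, ∃ n : ℤ, (h z + a₀ - sgn * Real.pi * u z) / (2 * Real.pi) = n := by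
    intro s sgn hs z hz
    have h1 : Complex.exp (((h z + a₀ : ℝ) : ℂ) * Complex.I)
        = Complex.exp ((sgn * Real.pi * u z : ℝ) * Complex.I) := by
      rw [← hid z, hs z hz]
    obtain ⟨n, hn⟩ := Complex.exp_eq_exp_iff_exists_int.mp h1
    refine ⟨n, ?_⟩
    have him := congrArg Complex.im hn
    simp only [Complex.add_im, Complex.mul_im, Complex.ofReal_re, Complex.I_im,
      Complex.ofReal_im, Complex.I_re, Complex.intCast_im, Complex.intCast_re,
      Complex.mul_re, Complex.re_ofNat, Complex.im_ofNat] at him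
    have hπ : Real.pi ≠ 0 := Real.pi_ne_zero
    field_simp
    push_cast at him ⊢
    linarith
  have hφF₁ : ∀ z ∈ F₁, φ z = Complex.exp ((1 * Real.pi * u z : ℝ) * Complex.I) := by
    intro z hz; rw [hφdef]; simp [hz]
  have hφF₂ : ∀ z ∈ F₂, φ z = Complex.exp (((-1) * Real.pi * u z : ℝ) * Complex.I) := by
    intro z hz
    by_cases h1 : z ∈ F₁
    · have hz' : z ∈ F₁ ∩ F₂ := ⟨h1, hz⟩
      rcases hval z hz' with h | h
      · rw [hφdef]; simp [h1, h]
      · rw [hφdef]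
        simp only [h1, if_pos, h]
        exact exp_real_I_eq 1 (by ring)
    · rw [hφdef]; simp only [h1, if_neg, not_false_iff]
      congr 1
      push_cast
      ring
  obtain ⟨k₁, hk₁⟩ := hn₁
  obtain ⟨k₂, hk₂⟩ := hn₂
  have hk₁' : k₁ ∈ F₁ ∩ F₂ := by rw [hK]; exact Or.inl hk₁
  have hk₂' : k₂ ∈ F₁ ∩ F₂ := by rw [hK]; exact Or.inr hk₂
  have hu₁0 : u k₁ = 0 := hu0 hk₁
  have hu₂1 : u k₂ = 1 := hu1 hk₂
  -- constancy on F₁ and F₂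
  have hd₁ := int_valued_const hc₁
    (g := fun z => (h z + a₀ - 1 * Real.pi * u z) / (2 * Real.pi))
    (by
      apply ContinuousOn.div_const
      exact ((hhc.continuousOn.add continuousOn_const).sub
        ((continuousOn_const.mul u.continuous.continuousOn))))
    (hint F₁ 1 hφF₁) hk₁'.1 hk₂'.1
  have hd₂ := int_valued_const hc₂
    (g := fun z => (h z + a₀ - (-1) * Real.pi * u z) / (2 * Real.pi))
    (by
      apply ContinuousOn.div_const
      exact ((hhc.continuousOn.add continuousOn_const).sub
        ((continuousOn_const.mul u.continuous.continuousOn))))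
    (hint F₂ (-1) hφF₂) hk₁'.2 hk₂'.2
  have hπ : (0:ℝ) < Real.pi := Real.pi_pos
  have h2π : (2:ℝ) * Real.pi ≠ 0 := by positivity
  simp only [hu₁0, hu₂1] at hd₁ hd₂
  field_simp at hd₁ hd₂
  linarith

/-- Šura-Bura: in a compact Hausdorff space, a connected component disjoint from a closed
set is contained in a clopen set disjoint from it. -/
lemma clopen_sep {X : Type*} [TopologicalSpace X] [CompactSpace X] [T2Space X]
    (x : X) {B : Set X} (hB : IsClosed B) (hdisj : connectedComponent x ∩ B = ∅) :
    ∃ P : Set X, IsClopen P ∧ x ∈ P ∧ P ∩ B = ∅ := by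
  classical
  have hcc := connectedComponent_eq_iInter_isClopen x
  have hBc : IsCompact B := hB.isCompact
  have hint : B ∩ ⋂ (Z : { Z : Set X // IsClopen Z ∧ x ∈ Z }), ↑Z = ∅ := by
    rw [inter_comm, ← hcc]
    exact hdisj
  obtain ⟨t, ht⟩ := hBc.elim_finite_subfamily_closed
    (fun Z : { Z : Set X // IsClopen Z ∧ x ∈ Z } => (Z : Set X))
    (fun Z => Z.2.1.isClosed) hint
  refine ⟨⋂ Z ∈ t, (Z : Set X), ?_, ?_, ?_⟩
  · exact isClopen_biInter_finset fun Z _ => Z.2.1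
  · exact mem_iInter₂.mpr fun Z _ => Z.2.2
  · rw [inter_comm]
    simpa using ht

/-- transfer of preconnectedness through `Subtype.val` preimages -/
lemma preconnected_preimage_val {E s : Set R2} (hsE : s ⊆ E) (hs : IsPreconnected s) :
    IsPreconnected ((Subtype.val : E → R2) ⁻¹' s) := by
  have hind : Topology.IsInducing (Subtype.val : E → R2) := Topology.IsInducing.subtypeVal
  rw [← hind.isPreconnected_image]
  have : Subtype.val '' ((Subtype.val : E → R2) ⁻¹' s) = s := by
    rw [Subtype.image_preimage_coe]
    exact inter_eq_self_of_subset_right hsE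
  rw [this]
  exact hs

lemma le_infDist_of {V : Set R2} (hne : V.Nonempty) {x : R2} {b : ℝ}
    (h : ∀ v ∈ V, b ≤ dist x v) : b ≤ infDist x V := by
  have : Nonempty ↥V := hne.to_subtype
  rw [infDist_eq_iInf]
  exact le_ciInf fun v => h v v.2

lemma main_pos {f : R2 → ℝ} (hf : Differentiable ℝ f) (hgrad : ∀ x, fderiv ℝ f x ≠ 0) {c : ℝ}
    {D : Set R2} (hD : IsConnCompOf {y | f y ≠ c} D)
    (hpos : ∀ y ∈ D, c < f y)
    {V : Set R2} (hVD : V ⊆ frontier D) (hVne : V.Nonempty) (hVcp : IsCompact V)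
    {δ : ℝ} (hδ : 0 < δ) (hsep : ∀ x ∈ frontier D, x ∉ V → δ ≤ infDist x V) : False := by
  classical
  haveI : PreconnectedSpace R2 := ⟨(convex_univ : Convex ℝ (univ : Set R2)).isPreconnected⟩
  obtain ⟨x₀, hx₀S, hx₀D⟩ := hD
  set S : Set R2 := {y | f y ≠ c} with hSdef
  have hSopen : IsOpen S := by
    have : S = f ⁻¹' ({c}ᶜ) := rfl
    rw [this]
    exact (isClosed_singleton.isOpen_compl).preimage hf.continuous
  have hDopen : IsOpen D := hx₀D ▸ hSopen.connectedComponentIn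
  have hDne : D.Nonempty := ⟨x₀, hx₀D ▸ mem_connectedComponentIn hx₀S⟩
  have hDpre : IsPreconnected D := hx₀D ▸ isPreconnected_connectedComponentIn
  have hDsub : D ⊆ S := hx₀D ▸ connectedComponentIn_subset _ _
  have habsorb : ∀ z ∈ closure D, f z ≠ c → z ∈ D := by
    intro z hz hfz
    have hzS : z ∈ S := hfz
    set W := connectedComponentIn S z with hW
    have hWopen : IsOpen W := hSopen.connectedComponentIn
    have hzW : z ∈ W := mem_connectedComponentIn hzS
    obtain ⟨y, hyW, hyD⟩ : (W ∩ D).Nonempty := by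
      rw [_root_.mem_closure_iff] at hz
      obtain ⟨y, hy⟩ := hz W hWopen hzW
      exact ⟨y, hy.1, hy.2⟩
    have h1 : W = connectedComponentIn S y := connectedComponentIn_eq hyW
    have h2 : connectedComponentIn S x₀ = connectedComponentIn S y :=
      connectedComponentIn_eq (by rw [hx₀D]; exact hyD)
    rw [h1, ← h2, hx₀D] at hzW
    exact hzW
  have hfrc : ∀ z ∈ frontier D, f z = c := by
    intro z hz
    rw [hDopen.frontier_eq] at hz
    by_contra h
    exact hz.2 (habsorb z hz.1 h)
  have hDunb : ¬ Bornology.IsBounded D := fun hb => pocket hf hgrad hDopen hb hDne hfrc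
  have hVcl : IsClosed V := hVcp.isClosed
  set Sep : Set R2 := {x : R2 | δ ≤ infDist x V} with hSepdef
  have hSepcl : IsClosed Sep := isClosed_le continuous_const (continuous_infDist_pt V)
  have hVSep : ∀ v ∈ V, v ∉ Sep := by
    intro v hv hvS
    have : infDist v V = 0 := infDist_zero_of_mem hv
    rw [hSepdef] at hvS
    simp only [mem_setOf_eq, this] at hvS
    linarith
  have hfrV : ∀ x ∈ frontier D, x ∉ Sep → x ∈ V := by
    intro x hx hxS
    by_contra h
    exact hxS (hsep x hx h)
  obtain ⟨RV, hRV⟩ := hVcp.isBounded.subset_closedBall 0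
  set R : ℝ := max RV 0 + δ + 1 with hRdef
  have hRpos : 0 < R := by positivity
  have hfarSep : ∀ x : R2, R ≤ ‖x‖ → x ∈ Sep := by
    intro x hx
    rw [hSepdef]
    simp only [mem_setOf_eq]
    apply le_infDist_of hVne
    intro v hv
    have hvn : ‖v‖ ≤ max RV 0 := by
      have := hRV hv
      simp only [mem_closedBall, dist_zero_right] at this
      exact this.trans (le_max_left _ _)
    have h1 : ‖x‖ - ‖v‖ ≤ ‖x - v‖ := norm_sub_norm_le x v
    have h2 : dist x v = ‖x - v‖ := dist_eq_norm x v
    rw [h2]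
    have : R - max RV 0 ≤ ‖x‖ - ‖v‖ := by linarith
    linarith [hRdef ▸ this]
  set UB : Set R2 := {x : R2 | R ≤ ‖x‖} with hUBdef
  have hUBpre : IsPreconnected UB := by
    have hrank : 1 < Module.rank ℝ R2 := by
      have hfr : Module.finrank ℝ R2 = 2 := finrank_euclideanSpace_fin
      have : Module.rank ℝ R2 = 2 := by
        rw [← Module.finrank_eq_rank, hfr]
        norm_num
      rw [this]
      exact_mod_cast one_lt_two
    have himg : UB = (fun p : ℝ × R2 => p.1 • p.2) '' (Ici (1:ℝ) ×ˢ sphere (0:R2) R) := by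
      apply Subset.antisymm
      · intro x hx
        have hxn : R ≤ ‖x‖ := hx
        have hxpos : 0 < ‖x‖ := lt_of_lt_of_le hRpos hxn
        refine ⟨(‖x‖ / R, (R / ‖x‖) • x), ⟨?_, ?_⟩, ?_⟩
        · simp only [mem_Ici]
          rw [le_div_iff₀ hRpos]
          linarith
        · simp only [mem_sphere_iff_norm, sub_zero, norm_smul, Real.norm_eq_abs]
          rw [abs_of_pos (by positivity)]
          field_simp
        · simp only [smul_smul]
          rw [div_mul_div_comm]
          rw [mul_comm ‖x‖ R]
          rw [div_self (by positivity)]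
          exact one_smul _ _
      · rintro _ ⟨⟨t, v⟩, ⟨ht, hv⟩, rfl⟩
        simp only [mem_Ici] at ht
        simp only [mem_sphere_iff_norm, sub_zero] at hv
        show R ≤ ‖t • v‖
        rw [norm_smul, Real.norm_eq_abs, abs_of_pos (by linarith), hv]
        nlinarith
    rw [himg]
    exact ((isPreconnected_Ici).prod (isPreconnected_sphere hrank 0 R)).image _
      (continuous_smul.continuousOn)
  have hUBSep : UB ⊆ Sep := fun x hx => hfarSep x hx
  obtain ⟨xfar, hxfar⟩ : ∃ x : R2, ‖x‖ = R := by
    obtain ⟨x, hx⟩ := NormedSpace.sphere_nonempty (E := R2) (x := 0) (r := R) |>.mpr hRpos.le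
    refine ⟨x, ?_⟩
    simpa [mem_sphere_iff_norm] using hx
  have hxfUB : xfar ∈ UB := by rw [hUBdef]; simp [hxfar]
  have hxfSep : xfar ∈ Sep := hUBSep hxfUB
  set Z : Set R2 := connectedComponentIn Sep xfar with hZdef
  have hZpre : IsPreconnected Z := isPreconnected_connectedComponentIn
  have hZsub : Z ⊆ Sep := connectedComponentIn_subset _ _
  have hZcl : IsClosed Z := by
    apply isClosed_of_closure_subset
    apply IsPreconnected.subset_connectedComponentIn hZpre.closure
    · exact subset_closure (mem_connectedComponentIn hxfSep)
    · exact (closure_mono hZsub).trans hSepcl.closure_eq.subset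
  have hUBZ : UB ⊆ Z := hUBpre.subset_connectedComponentIn hxfUB hUBSep
  set O : Set R2 := (closure D ∪ Z)ᶜ with hOdef
  have hOopen : IsOpen O := (isClosed_closure.union hZcl).isOpen_compl
  have hObd : Bornology.IsBounded O := by
    apply (Metric.isBounded_ball (x := (0:R2)) (r := R)).subset
    intro x hx
    simp only [mem_ball, dist_zero_right]
    by_contra h
    push_neg at h
    exact hx (Or.inr (hUBZ h))
  have hOclD : O ∩ closure D = ∅ := by
    ext x
    simp only [mem_inter_iff, mem_empty_iff_false, iff_false, not_and]
    intro hx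
    rw [hOdef] at hx
    intro hc
    exact hx (Or.inl hc)
  set E : Set R2 := closure O with hEdef
  have hEcp : IsCompact E := isCompact_of_isClosed_isBounded isClosed_closure hObd.closure
  have hEdiff : E \ O ⊆ V ∪ Sep := by
    intro x hx
    have hxfr : x ∈ frontier O := by
      rw [hOopen.frontier_eq]
      exact hx
    have h1 : frontier O ⊆ frontier D ∪ Z := by
      rw [hOdef, frontier_compl]
      intro y hy
      rcases frontier_union_subset _ _ hy with h | h
      · exact Or.inl (frontier_closure_subset h.1)
      · exact Or.inr (hZcl.frontier_subset h.2)
    rcases h1 hxfr with h | h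
    · by_cases hxS : x ∈ Sep
      · exact Or.inr hxS
      · exact Or.inl (hfrV x h hxS)
    · exact Or.inr (hZsub h)
  have hvE : ∀ v ∈ V, v ∈ E := by
    intro v hv
    rw [hEdef, _root_.mem_closure_iff]
    intro G hG hvG
    obtain ⟨ε, hε, hball⟩ := Metric.isOpen_iff.mp hG v hvG
    set ε' : ℝ := min ε δ with hε'def
    have hε' : 0 < ε' := lt_min hε hδ
    by_contra hno
    rw [not_nonempty_iff_eq_empty] at hno
    have hgeq : ∀ y, dist y v < ε' → c ≤ f y := by
      intro y hy
      have hyG : y ∈ G := hball (by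
        simp only [mem_ball]
        exact hy.trans_le (min_le_left _ _))
      have hyO : y ∉ O := fun h => (eq_empty_iff_forall_notMem.mp hno) y ⟨hyG, h⟩
      rw [hOdef] at hyO
      simp only [mem_compl_iff, not_not] at hyO
      have hySep : y ∉ Sep := by
        intro hyS
        rw [hSepdef] at hyS
        simp only [mem_setOf_eq] at hyS
        have : infDist y V ≤ dist y v := infDist_le_dist_of_mem hv
        have : δ ≤ dist y v := le_trans hyS this
        have : ε' ≤ δ := min_le_right _ _
        linarith
      rcases hyO with h | h
      · -- y ∈ closure D
        by_cases hyD : y ∈ D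
        · exact (hpos y hyD).le
        · have : y ∈ frontier D := by rw [hDopen.frontier_eq]; exact ⟨h, hyD⟩
          have := hfrV y this hySep
          exact (hfrc y (hVD this)).ge
      · exact absurd (hZsub h) hySep
    obtain ⟨-, y, hyd, hyf⟩ := exists_near_gt_lt hf hgrad v hε'
    have : c ≤ f y := hgeq y hyd
    have hfv : f v = c := hfrc v (hVD hv)
    linarith
  obtain ⟨v₀, hv₀⟩ := hVne
  have hv₀E : v₀ ∈ E := hvE v₀ hv₀
  haveI : CompactSpace ↥E := isCompact_iff_compactSpace.mp hEcp
  set v' : ↥E := ⟨v₀, hv₀E⟩ with hv'def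
  set CC : Set ↥E := connectedComponent v' with hCCdef
  set Cv : Set R2 := Subtype.val '' CC with hCvdef
  have hCvpre : IsPreconnected Cv :=
    isPreconnected_connectedComponent.image _ continuous_subtype_val.continuousOn
  have hCvcl : IsClosed Cv :=
    (isClosed_connectedComponent.isCompact.image continuous_subtype_val).isClosed
  have hCvsub : Cv ⊆ E := by
    rintro _ ⟨w, -, rfl⟩
    exact w.2
  have hv₀Cv : v₀ ∈ Cv := ⟨v', mem_connectedComponent, rfl⟩
  set B : Set ↥E := (Subtype.val : ↥E → R2) ⁻¹' Sep with hBdef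
  have hBcl : IsClosed B := hSepcl.preimage continuous_subtype_val
  by_cases hCB : CC ∩ B = ∅
  · -- Case A: the component of v₀ avoids Sep; extract a clopen pocket
    obtain ⟨P, hPclopen, hv'P, hPB⟩ := clopen_sep v' hBcl hCB
    obtain ⟨G, hGopen, hPG⟩ := isOpen_induced_iff.mp hPclopen.2
    set Q : Set R2 := O ∩ G with hQdef
    have hQopen : IsOpen Q := hOopen.inter hGopen
    have hv₀G : v₀ ∈ G := by
      have : v' ∈ (Subtype.val : ↥E → R2) ⁻¹' G := by rw [hPG]; exact hv'P
      exact this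
    have hQne : Q.Nonempty := by
      have hcl : v₀ ∈ closure O := hv₀E
      rw [_root_.mem_closure_iff] at hcl
      obtain ⟨y, hyG, hyO⟩ := hcl G hGopen hv₀G
      exact ⟨y, hyO, hyG⟩
    have hPim_cl : IsClosed (Subtype.val '' P) :=
      (hPclopen.1.isCompact.image continuous_subtype_val).isClosed
    have hQsubP : Q ⊆ Subtype.val '' P := by
      intro y hy
      have hyE : y ∈ E := subset_closure hy.1
      refine ⟨⟨y, hyE⟩, ?_, rfl⟩
      rw [← hPG]
      exact hy.2
    have hclQ : closure Q ⊆ Subtype.val '' P := hPim_cl.closure_subset_iff.mpr hQsubP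
    have hfrQ : ∀ x ∈ frontier Q, f x = c := by
      intro x hx
      rw [hQopen.frontier_eq] at hx
      obtain ⟨p, hpP, hpx⟩ := hclQ hx.1
      have hxE : x ∈ E := by rw [← hpx]; exact p.2
      have hxG : x ∈ G := by
        rw [← hpx]
        have : p ∈ (Subtype.val : ↥E → R2) ⁻¹' G := by rw [hPG]; exact hpP
        exact this
      have hxO : x ∉ O := fun h => hx.2 ⟨h, hxG⟩
      have hxVS : x ∈ V ∪ Sep := hEdiff ⟨hxE, hxO⟩
      rcases hxVS with h | h
      · exact hfrc x (hVD h)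
      · exfalso
        have hpB : p ∈ B := by
          rw [hBdef]
          show (p : R2) ∈ Sep
          rw [hpx]
          exact h
        have : p ∈ P ∩ B := ⟨hpP, hpB⟩
        rw [hPB] at this
        exact this
    exact pocket hf hgrad hQopen (hObd.subset inter_subset_left) hQne hfrQ
  · -- Case B: the component of v₀ reaches Sep
    obtain ⟨w', hw'CC, hw'B⟩ := nonempty_iff_ne_empty.mpr hCB
    set w : R2 := (w' : R2) with hwdef
    have hwCv : w ∈ Cv := ⟨w', hw'CC, rfl⟩
    have hwSep : w ∈ Sep := hw'B
    set Ov : Set R2 := O ∩ Cv with hOvdef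
    have hOcomp : ∀ x, x ∈ O → x ∈ Cv → connectedComponentIn O x ⊆ Cv := by
      intro x hxO hxCv
      set A : Set R2 := connectedComponentIn O x with hAdef
      have hApre : IsPreconnected A := isPreconnected_connectedComponentIn
      have hclA : closure A ⊆ E := closure_mono (connectedComponentIn_subset O x)
      have hA'pre : IsPreconnected ((Subtype.val : ↥E → R2) ⁻¹' closure A) :=
        preconnected_preimage_val hclA hApre.closure
      have hxE : x ∈ E := subset_closure hxO
      set x' : ↥E := ⟨x, hxE⟩ with hx'def
      have hx'A' : x' ∈ (Subtype.val : ↥E → R2) ⁻¹' closure A := by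
        show (x : R2) ∈ closure A
        exact subset_closure (mem_connectedComponentIn hxO)
      have hx'CC : x' ∈ CC := by
        obtain ⟨p, hpCC, hpx⟩ := hxCv
        have : p = x' := Subtype.ext hpx
        rw [← this]
        exact hpCC
      have hsub : (Subtype.val : ↥E → R2) ⁻¹' closure A ⊆ CC := by
        have h1 : (Subtype.val : ↥E → R2) ⁻¹' closure A ⊆ connectedComponent x' :=
          hA'pre.subset_connectedComponent hx'A'
        have h2 : CC = connectedComponent x' := connectedComponent_eq hx'CC
        rw [h2]
        exact h1
      intro z hz
      have hzE : z ∈ E := hclA (subset_closure hz)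
      have : (⟨z, hzE⟩ : ↥E) ∈ (Subtype.val : ↥E → R2) ⁻¹' closure A := by
        show (z : R2) ∈ closure A
        exact subset_closure hz
      exact ⟨⟨z, hzE⟩, hsub this, rfl⟩
    have hOvopen : IsOpen Ov := by
      rw [isOpen_iff_forall_mem_open]
      intro x hx
      exact ⟨connectedComponentIn O x,
        subset_inter (connectedComponentIn_subset O x) (hOcomp x hx.1 hx.2),
        hOopen.connectedComponentIn, mem_connectedComponentIn hx.1⟩
    have hCvO_sub : Cv \ O ⊆ V ∪ Sep := fun x hx => hEdiff ⟨hCvsub hx.1, hx.2⟩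
    set K₁ : Set R2 := (Cv \ O) ∩ V with hK₁def
    set K₂ : Set R2 := (Cv \ O) ∩ Sep with hK₂def
    have hv₀O : v₀ ∉ O := by
      intro h
      have hv₀clD : v₀ ∈ closure D := frontier_subset_closure (hVD hv₀)
      have : v₀ ∈ O ∩ closure D := ⟨h, hv₀clD⟩
      rw [hOclD] at this
      exact this
    by_cases hK₂e : K₂ = ∅
    · -- Case B1
      have hCvV : Cv \ O ⊆ V := by
        intro x hx
        rcases hCvO_sub hx with h | h
        · exact h
        · exfalso
          have : x ∈ K₂ := ⟨hx, h⟩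
          rw [hK₂e] at this
          exact this
      have hwO : w ∈ O := by
        by_contra h
        exact hVSep w (hCvV ⟨hwCv, h⟩) hwSep
      have hOvne : Ov.Nonempty := ⟨w, hwO, hwCv⟩
      have hfrOv : ∀ x ∈ frontier Ov, f x = c := by
        intro x hx
        rw [hOvopen.frontier_eq] at hx
        have hxCv : x ∈ Cv := hCvcl.closure_subset_iff.mpr inter_subset_right hx.1
        have hxO : x ∉ O := by
          intro h
          exact hx.2 ⟨h, hxCv⟩
        exact hfrc x (hVD (hCvV ⟨hxCv, hxO⟩))
      exact pocket hf hgrad hOvopen (hObd.subset inter_subset_left) hOvne hfrOv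
    · -- Case B2: unicoherence
      obtain ⟨k₂, hk₂⟩ := nonempty_iff_ne_empty.mpr hK₂e
      apply unicoherence (F₁ := Ovᶜ) (F₂ := Cv) (K₁ := K₁) (K₂ := K₂)
        hOvopen.isClosed_compl hCvcl ?_ hCvpre ?_ ?_
        (((hCvcl.inter hOopen.isClosed_compl)).inter hVcl)
        (((hCvcl.inter hOopen.isClosed_compl)).inter hSepcl)
        ?_ ⟨v₀, ⟨⟨hv₀Cv, hv₀O⟩, hv₀⟩⟩ ⟨k₂, hk₂⟩
      · -- IsPreconnected Ovᶜ
        set core : Set R2 := closure D ∪ Z with hcoredef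
        have hcoreO : Oᶜ = core := by rw [hOdef, compl_compl]
        obtain ⟨d, hdD, hdR⟩ : ∃ d ∈ D, R < ‖d‖ := by
          by_contra h
          push_neg at h
          exact hDunb (isBounded_iff_forall_norm_le.mpr ⟨R, fun x hx => (h x hx)⟩)
        have hdZ : d ∈ Z := hUBZ hdR.le
        have hcore : IsPreconnected core :=
          IsPreconnected.union d (subset_closure hdD) hdZ hDpre.closure hZpre
        have hcoreOv : core ⊆ Ovᶜ := by
          intro x hx hxOv
          have : x ∈ O := hxOv.1
          rw [← hcoreO] at hx
          exact hx this
        have hxfarcore : xfar ∈ core := Or.inr (mem_connectedComponentIn hxfSep)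
        apply isPreconnected_of_forall xfar
        intro y hy
        by_cases hyO : y ∈ O
        · set A : Set R2 := connectedComponentIn O y with hAdef
          have hApre : IsPreconnected A := isPreconnected_connectedComponentIn
          have hyA : y ∈ A := mem_connectedComponentIn hyO
          have hAOv : A ∩ Ov = ∅ := by
            rw [eq_empty_iff_forall_notMem]
            rintro z ⟨hzA, hzOv⟩
            have h1 : connectedComponentIn O z ⊆ Cv := hOcomp z hzOv.1 hzOv.2
            have h2 : A = connectedComponentIn O z := connectedComponentIn_eq hzA
            have hyCv : y ∈ Cv := h1 (h2 ▸ hyA)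
            exact hy ⟨hyO, hyCv⟩
          have hclAO : closure A ∩ O ⊆ A := by
            rintro z ⟨hzcl, hzO⟩
            set W := connectedComponentIn O z with hWdef
            have hWopen : IsOpen W := hOopen.connectedComponentIn
            have hzW : z ∈ W := mem_connectedComponentIn hzO
            obtain ⟨zz, hzzW, hzzA⟩ : (W ∩ A).Nonempty := by
              rw [_root_.mem_closure_iff] at hzcl
              obtain ⟨zz, h⟩ := hzcl W hWopen hzW
              exact ⟨zz, h.1, h.2⟩
            have e1 : W = connectedComponentIn O zz := connectedComponentIn_eq hzzW
            have e2 : A = connectedComponentIn O zz := connectedComponentIn_eq hzzA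
            rw [e1, ← e2] at hzW
            exact hzW
          have hclAOv : closure A ∩ Ov = ∅ := by
            rw [eq_empty_iff_forall_notMem]
            rintro z ⟨hzcl, hzOv⟩
            have : z ∈ A := hclAO ⟨hzcl, hzOv.1⟩
            rw [eq_empty_iff_forall_notMem] at hAOv
            exact hAOv z ⟨this, hzOv⟩
          have hAnontriv : (closure A ∩ core).Nonempty := by
            by_contra h
            rw [not_nonempty_iff_eq_empty] at h
            have hclsub : closure A ⊆ A := by
              intro z hz
              by_cases hzO : z ∈ O
              · exact hclAO ⟨hz, hzO⟩
              · exfalso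
                have : z ∈ core := by rw [← hcoreO]; exact hzO
                rw [eq_empty_iff_forall_notMem] at h
                exact h z ⟨hz, this⟩
            have hAcl : IsClosed A := isClosed_of_closure_subset hclsub
            have hAopen : IsOpen A := hOopen.connectedComponentIn
            rcases isClopen_iff.mp ⟨hAcl, hAopen⟩ with h' | h'
            · rw [h'] at hyA; exact hyA
            · have : xfar ∈ A := by rw [h']; trivial
              have : xfar ∈ O := connectedComponentIn_subset O y this
              rw [← hcoreO] at hxfarcore
              exact hxfarcore this
          obtain ⟨p, hpA, hpcore⟩ := hAnontriv
          refine ⟨core ∪ closure A, ?_, ?_, ?_, ?_⟩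
          · apply union_subset hcoreOv
            intro z hz hzOv
            rw [eq_empty_iff_forall_notMem] at hclAOv
            exact hclAOv z ⟨hz, hzOv⟩
          · exact Or.inl hxfarcore
          · exact Or.inr (subset_closure hyA)
          · exact IsPreconnected.union p hpcore hpA hcore hApre.closure
        · refine ⟨core, hcoreOv, hxfarcore, ?_, hcore⟩
          rw [← hcoreO]
          exact hyO
      · -- F₁ ∪ F₂ = univ
        rw [eq_univ_iff_forall]
        intro x
        by_cases h : x ∈ Cv
        · exact Or.inr h
        · exact Or.inl (fun hx => h hx.2)
      · -- F₁ ∩ F₂ = K₁ ∪ K₂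
        ext x
        simp only [mem_inter_iff, mem_compl_iff, mem_union, hK₁def, hK₂def, mem_diff]
        constructor
        · rintro ⟨hxOv, hxCv⟩
          have hxO : x ∉ O := fun h => hxOv ⟨h, hxCv⟩
          rcases hCvO_sub ⟨hxCv, hxO⟩ with h | h
          · exact Or.inl ⟨⟨hxCv, hxO⟩, h⟩
          · exact Or.inr ⟨⟨hxCv, hxO⟩, h⟩
        · rintro (⟨⟨hxCv, hxO⟩, -⟩ | ⟨⟨hxCv, hxO⟩, -⟩) <;>
            exact ⟨fun h => hxO h.1, hxCv⟩
      · -- Disjoint K₁ K₂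
        rw [disjoint_left]
        rintro x ⟨-, hxV⟩ ⟨-, hxS⟩
        exact hVSep x hxV hxS

lemma main_lemma {f : R2 → ℝ} (hf : Differentiable ℝ f) (hgrad : ∀ x, fderiv ℝ f x ≠ 0) {c : ℝ}
    {D : Set R2} (hD : IsConnCompOf {y | f y ≠ c} D)
    {V : Set R2} (hVD : V ⊆ frontier D) (hVne : V.Nonempty) (hVcp : IsCompact V)
    {δ : ℝ} (hδ : 0 < δ) (hsep : ∀ x ∈ frontier D, x ∉ V → δ ≤ infDist x V) : False := by
  obtain ⟨x₀, hx₀S, hx₀D⟩ := hD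
  have hDpre : IsPreconnected D := hx₀D ▸ isPreconnected_connectedComponentIn
  have hDsub : D ⊆ {y | f y ≠ c} := hx₀D ▸ connectedComponentIn_subset _ _
  by_cases hsgn : ∀ y ∈ D, c < f y
  · exact main_pos hf hgrad ⟨x₀, hx₀S, hx₀D⟩ hsgn hVD hVne hVcp hδ hsep
  · push_neg at hsgn
    obtain ⟨a, haD, hafc⟩ := hsgn
    have hafc' : f a < c := lt_of_le_of_ne hafc (hDsub haD)
    have hneg : ∀ y ∈ D, f y < c := by
      intro y hyD
      by_contra h
      push_neg at h
      have h' : c < f y := lt_of_le_of_ne h (Ne.symm (hDsub hyD))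
      have hIcc : c ∈ Icc (f a) (f y) := ⟨hafc'.le, h'.le⟩
      have := hDpre.intermediate_value haD hyD hf.continuous.continuousOn hIcc
      obtain ⟨d, hdD, hdc⟩ := this
      exact (hDsub hdD) hdc
    have hset : {y : R2 | -f y ≠ -c} = {y : R2 | f y ≠ c} := by
      ext y; simp
    have hD' : IsConnCompOf {y : R2 | -f y ≠ -c} D := by
      rw [hset]
      exact ⟨x₀, hx₀S, hx₀D⟩
    have hgrad' : ∀ x, fderiv ℝ (fun y => -f y) x ≠ 0 := by
      intro x
      rw [fderiv_fun_neg]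
      simp only [ne_eq, neg_eq_zero]
      exact hgrad x
    exact main_pos hf.neg hgrad' hD' (fun y hy => by
      simp only [Pi.neg_apply, neg_lt_neg_iff]
      exact hneg y hy) hVD hVne hVcp hδ hsep

lemma reduction {f : R2 → ℝ} (hf : Differentiable ℝ f) (hgrad : ∀ x, fderiv ℝ f x ≠ 0) {c : ℝ}
    {D : Set R2} (hD : IsConnCompOf {y | f y ≠ c} D)
    {U W : Set (OnePoint R2)} (hU : IsOpen U) (hW : IsOpen W)
    (hcov : ((fun p : R2 => (p : OnePoint R2)) '' frontier D ∪ {OnePoint.infty}) ⊆ U ∪ W)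
    (hemp : ((fun p : R2 => (p : OnePoint R2)) '' frontier D ∪ {OnePoint.infty}) ∩ (U ∩ W) = ∅)
    (hinfU : OnePoint.infty ∈ U)
    (hWne : (((fun p : R2 => (p : OnePoint R2)) '' frontier D ∪ {OnePoint.infty}) ∩ W).Nonempty) :
    False := by
  classical
  set Sf : Set (OnePoint R2) :=
    (fun p : R2 => (p : OnePoint R2)) '' frontier D ∪ {OnePoint.infty} with hSfdef
  have hdisjUW : ∀ x ∈ Sf, x ∈ U → x ∈ W → False := by
    intro x hx h1 h2
    have : x ∈ Sf ∩ (U ∩ W) := ⟨hx, h1, h2⟩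
    rw [hemp] at this
    exact this
  have hcompl : IsCompact (((fun p : R2 => (p : OnePoint R2)) ⁻¹' U)ᶜ) :=
    ((OnePoint.isOpen_iff_of_mem' hinfU).mp hU).1
  set V₀ : Set R2 := frontier D \ (fun p : R2 => (p : OnePoint R2)) ⁻¹' U with hV₀def
  have hV₀cl : IsClosed V₀ :=
    isClosed_frontier.inter (OnePoint.continuous_coe.isOpen_preimage U hU).isClosed_compl
  have hV₀cp : IsCompact V₀ := hcompl.of_isClosed_subset hV₀cl (fun x hx => hx.2)
  have hV₀sub : V₀ ⊆ frontier D := fun x hx => hx.1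
  have hV₀ne : V₀.Nonempty := by
    obtain ⟨b, hbSf, hbW⟩ := hWne
    induction b using OnePoint.rec with
    | infty => exact absurd (hdisjUW _ hbSf hinfU hbW) not_false
    | coe b₀ =>
        have hb₀fr : b₀ ∈ frontier D := by
          rcases hbSf with ⟨y, hy, hyb⟩ | hb
          · rwa [← OnePoint.coe_injective hyb]
          · exact absurd hb (OnePoint.coe_ne_infty b₀)
        refine ⟨b₀, hb₀fr, ?_⟩
        intro hbU
        exact hdisjUW _ hbSf hbU hbW
  set Rest : Set R2 := frontier D \ (fun p : R2 => (p : OnePoint R2)) ⁻¹' W with hRestdef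
  have hRestcl : IsClosed Rest :=
    isClosed_frontier.inter (OnePoint.continuous_coe.isOpen_preimage W hW).isClosed_compl
  have hSfmem : ∀ x ∈ frontier D, ((x : OnePoint R2)) ∈ Sf := by
    intro x hx
    exact Or.inl ⟨x, hx, rfl⟩
  have hcover : ∀ x ∈ frontier D, x ∉ V₀ → x ∈ Rest := by
    intro x hx hxV₀
    have hxU : (x : OnePoint R2) ∈ U := by
      by_contra h
      exact hxV₀ ⟨hx, h⟩
    refine ⟨hx, ?_⟩
    intro hxW
    exact hdisjUW _ (hSfmem x hx) hxU hxW
  have hV₀Rest : ∀ x ∈ V₀, x ∉ Rest := by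
    intro x hx hxR
    rcases hcov (hSfmem x hx.1) with h | h
    · exact hx.2 h
    · exact hxR.2 h
  by_cases hRe : Rest = ∅
  · refine main_lemma hf hgrad hD hV₀sub hV₀ne hV₀cp one_pos ?_
    intro x hx hxV₀
    have := hcover x hx hxV₀
    rw [hRe] at this
    exact absurd this (notMem_empty x)
  · have hRestne : Rest.Nonempty := nonempty_iff_ne_empty.mpr hRe
    obtain ⟨vm, hvm, hmin⟩ := hV₀cp.exists_isMinOn hV₀ne (continuous_infDist_pt Rest).continuousOn
    set δ : ℝ := infDist vm Rest with hδdef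
    have hδpos : 0 < δ := by
      rw [hδdef]
      exact (hRestcl.notMem_iff_infDist_pos hRestne).mp (hV₀Rest vm hvm)
    refine main_lemma hf hgrad hD hV₀sub hV₀ne hV₀cp hδpos ?_
    intro x hx hxV₀
    have hxR : x ∈ Rest := hcover x hx hxV₀
    apply le_infDist_of hV₀ne
    intro v hv
    have h1 : infDist v Rest ≤ dist v x := infDist_le_dist_of_mem hxR
    have h2 : δ ≤ infDist v Rest := hmin hv
    rw [dist_comm]
    linarith

end FrontierAux

/-- For a connected component `D` of `{f ≠ c}`, the set `∂D ∪ {∞}` is a connected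
subset of the one-point compactification `S² = ℝ² ∪ {∞}`. -/
theorem frontier_union_infty_connected
    (f : R2 → ℝ) (hf : Differentiable ℝ f) (hgrad : ∀ x, fderiv ℝ f x ≠ 0) (c : ℝ)
    (D : Set R2) (hD : IsConnCompOf {y | f y ≠ c} D) :
    IsConnected ((fun p : R2 => (p : OnePoint R2)) '' frontier D ∪ {OnePoint.infty}) := by
  constructor
  · exact ⟨OnePoint.infty, Or.inr rfl⟩
  · intro U W hU hW hcov hne1 hne2
    by_contra hemp
    rw [not_nonempty_iff_eq_empty] at hemp
    have hinf : OnePoint.infty ∈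
        ((fun p : R2 => (p : OnePoint R2)) '' frontier D ∪ {OnePoint.infty}) := Or.inr rfl
    rcases hcov hinf with h | h
    · exact absurd (FrontierAux.reduction hf hgrad hD hU hW hcov hemp h hne2) not_false
    · refine absurd (FrontierAux.reduction hf hgrad hD hW hU ?_ ?_ h hne1) not_false
      · rwa [union_comm W U]
      · rwa [inter_comm W U]
end
end
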